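/- arXiv:1511.00353 — 3 statements merged into one kernel-verified Lean document; each statement's English description precedes it below -/
import Mathlib

section
/- Let (E_t)_{t≥1} be i.i.d. nonnegative random variables, B̄ > 0, γ > 0, and μ = E[min{E_1, B̄}] > 0. Then the optimal long-term average throughput Θ, defined as the supremum over all admissible online policies g of liminf_{n→∞} T_n(g), satisfies ½·log₂(1 + γ·μ) − 1/(2·ln 2) ≤ Θ ≤ ½·log₂(1 + γ·μ), and also Θ ≥ (1/2)·½·log₂(1 + γ·μ). -/
open MeasureTheory ProbabilityTheory Filter Finset

section AuxDefs
variable {Ω : Type*}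

/-- Normalized surrogate battery process for the fixed-fraction policy. -/
noncomputable def uSeq (q B : ℝ) (E : ℕ → Ω → ℝ) : ℕ → Ω → ℝ
  | 0 => fun _ => 1
  | 1 => fun _ => 1
  | (t+2) => fun ω => min ((1 - q) * uSeq q B E (t+1) ω + min (E (t+2) ω) B / B) 1

/-- The battery process of the fixed-fraction policy. -/
noncomputable def bSeq (q B : ℝ) (E : ℕ → Ω → ℝ) : ℕ → Ω → ℝ
  | 0 => fun _ => B
  | 1 => fun _ => B
  | (t+2) => fun ω => min (bSeq q B E (t+1) ω - q * bSeq q B E (t+1) ω + E (t+2) ω) B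

/-- `Fin` version of `uSeq`: coordinate `i` stands for `E i`. -/
noncomputable def uFin (q B : ℝ) : (n : ℕ) → (Fin n → ℝ) → ℝ
  | 0 => fun _ => 1
  | 1 => fun _ => 1
  | 2 => fun _ => 1
  | (n+3) => fun e =>
      min ((1 - q) * uFin q B (n+2) (Fin.init e) + min (e (Fin.last (n+2))) B / B) 1

/-- `Fin` version of `bSeq`: coordinate `i` stands for `E (i+1)`. -/
noncomputable def bFin (q B : ℝ) : (n : ℕ) → (Fin n → ℝ) → ℝ
  | 0 => fun _ => B
  | 1 => fun _ => B
  | (n+2) => fun e =>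
      min (bFin q B (n+1) (Fin.init e) - q * bFin q B (n+1) (Fin.init e) + e (Fin.last (n+1))) B

lemma measurable_finInit {n : ℕ} : Measurable (Fin.init : (Fin (n+1) → ℝ) → Fin n → ℝ) :=
  measurable_pi_lambda _ fun _ => measurable_pi_apply _

lemma uFin_measurable (q B : ℝ) : ∀ n, Measurable (uFin q B n)
  | 0 => measurable_const
  | 1 => measurable_const
  | 2 => measurable_const
  | (n+3) => by
      have ih := uFin_measurable q B (n+2)
      unfold uFin
      exact (((ih.comp measurable_finInit).const_mul _).add
        (((measurable_pi_apply _).min measurable_const).div_const _)).min measurable_const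

lemma bFin_measurable (q B : ℝ) : ∀ n, Measurable (bFin q B n)
  | 0 => measurable_const
  | 1 => measurable_const
  | (n+2) => by
      have ih := bFin_measurable q B (n+1)
      unfold bFin
      exact (((ih.comp measurable_finInit).sub
        ((ih.comp measurable_finInit).const_mul _)).add (measurable_pi_apply _)).min
        measurable_const

lemma uSeq_measurable [MeasurableSpace Ω] (q B : ℝ) {E : ℕ → Ω → ℝ}
    (hE : ∀ t, Measurable (E t)) : ∀ t, Measurable (uSeq q B E t)
  | 0 => measurable_const
  | 1 => measurable_const
  | (t+2) => by
      have ih := uSeq_measurable q B hE (t+1)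
      unfold uSeq
      exact ((ih.const_mul _).add (((hE (t+2)).min measurable_const).div_const _)).min
        measurable_const

lemma bSeq_measurable [MeasurableSpace Ω] (q B : ℝ) {E : ℕ → Ω → ℝ}
    (hE : ∀ t, Measurable (E t)) : ∀ t, Measurable (bSeq q B E t)
  | 0 => measurable_const
  | 1 => measurable_const
  | (t+2) => by
      have ih := bSeq_measurable q B hE (t+1)
      unfold bSeq
      exact ((ih.sub (ih.const_mul _)).add (hE (t+2))).min measurable_const

lemma uSeq_eq_uFin (q B : ℝ) (E : ℕ → Ω → ℝ) : ∀ t (ω : Ω),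
    uSeq q B E t ω = uFin q B (t+1) (fun i : Fin (t+1) => E i.1 ω)
  | 0, ω => rfl
  | 1, ω => rfl
  | (t+2), ω => by
      have ih := uSeq_eq_uFin q B E (t+1) ω
      have h1 : Fin.init (fun i : Fin (t+3) => E i.1 ω) = fun i : Fin (t+2) => E i.1 ω := by
        funext i; simp [Fin.init]
      show min ((1 - q) * uSeq q B E (t+1) ω + min (E (t+2) ω) B / B) 1 = _
      rw [show uFin q B (t+3) = fun e =>
        min ((1 - q) * uFin q B (t+2) (Fin.init e) + min (e (Fin.last (t+2))) B / B) 1 from rfl]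
      simp only [h1, ← ih]
      rfl

lemma bSeq_eq_bFin (q B : ℝ) (E : ℕ → Ω → ℝ) : ∀ t (ω : Ω),
    bSeq q B E t ω = bFin q B t (fun i : Fin t => E (i.1 + 1) ω)
  | 0, ω => rfl
  | 1, ω => rfl
  | (t+2), ω => by
      have ih := bSeq_eq_bFin q B E (t+1) ω
      have h1 : Fin.init (fun i : Fin (t+2) => E (i.1 + 1) ω)
          = fun i : Fin (t+1) => E (i.1 + 1) ω := by
        funext i; simp [Fin.init]
      show min (bSeq q B E (t+1) ω - q * bSeq q B E (t+1) ω + E (t+2) ω) B = _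
      rw [show bFin q B (t+2) = fun e => min (bFin q B (t+1) (Fin.init e)
        - q * bFin q B (t+1) (Fin.init e) + e (Fin.last (t+1))) B from rfl]
      simp only [h1, ← ih]
      rfl

variable {q B : ℝ} {E : ℕ → Ω → ℝ}

lemma xval_mem (hB : 0 < B) (hE : ∀ t ω, 0 ≤ E t ω) (t : ℕ) (ω : Ω) :
    0 ≤ min (E t ω) B / B ∧ min (E t ω) B / B ≤ 1 := by
  constructor
  · exact div_nonneg (le_min (hE t ω) hB.le) hB.le
  · rw [div_le_one hB]; exact min_le_right _ _

lemma uSeq_bounds (hB : 0 < B) (hq : q < 1) (hE : ∀ t ω, 0 ≤ E t ω) :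
    ∀ t (ω : Ω), 0 < uSeq q B E t ω ∧ uSeq q B E t ω ≤ 1
  | 0, ω => ⟨one_pos, le_refl 1⟩
  | 1, ω => ⟨one_pos, le_refl 1⟩
  | (t+2), ω => by
      obtain ⟨h1, h2⟩ := uSeq_bounds hB hq hE (t+1) ω
      obtain ⟨hx0, hx1⟩ := xval_mem hB hE (t+2) ω
      refine ⟨lt_min (by nlinarith) one_pos, min_le_right _ _⟩

/-- the key one-step lower bound `u_{t+1} ≥ x + (1-x)(1-q)u_t`. -/
lemma uSeq_step (hB : 0 < B) (hq0 : 0 ≤ q) (hq : q < 1) (hE : ∀ t ω, 0 ≤ E t ω) :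
    ∀ t (ω : Ω), min (E (t+1) ω) B / B
      + (1 - min (E (t+1) ω) B / B) * ((1 - q) * uSeq q B E t ω) ≤ uSeq q B E (t+1) ω
  | 0, ω => by
      obtain ⟨hx0, hx1⟩ := xval_mem hB hE (0+1) ω
      have hu0 : uSeq q B E 0 ω = 1 := rfl
      rw [hu0]
      show _ ≤ (1:ℝ)
      nlinarith [mul_nonneg (sub_nonneg.2 hx1) hq0]
  | (t+1), ω => by
      obtain ⟨h1, h2⟩ := uSeq_bounds hB hq hE (t+1) ω
      obtain ⟨hx0, hx1⟩ := xval_mem hB hE (t+1+1) ω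
      show _ ≤ min ((1 - q) * uSeq q B E (t+1) ω + min (E (t+1+1) ω) B / B) 1
      have h1q : (0:ℝ) ≤ 1 - q := by linarith
      refine le_min ?_ ?_
      · nlinarith [mul_nonneg (mul_nonneg hx0 h1q) h1.le]
      · nlinarith [mul_nonneg (sub_nonneg.2 hx1)
          (sub_nonneg.2 (show (1-q) * uSeq q B E (t+1) ω ≤ 1 by nlinarith))]

lemma bSeq_bounds (hB : 0 < B) (hq0 : 0 ≤ q) (hq : q ≤ 1) (hE : ∀ t ω, 0 ≤ E t ω) :
    ∀ t (ω : Ω), 0 ≤ bSeq q B E t ω ∧ bSeq q B E t ω ≤ B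
  | 0, ω => ⟨hB.le, le_refl B⟩
  | 1, ω => ⟨hB.le, le_refl B⟩
  | (t+2), ω => by
      obtain ⟨h1, h2⟩ := bSeq_bounds hB hq0 hq hE (t+1) ω
      have hE2 := hE (t+2) ω
      exact ⟨le_min (by nlinarith) hB.le, min_le_right _ _⟩

lemma bSeq_ge_uSeq (hB : 0 < B) (hq0 : 0 ≤ q) (hq : q < 1) (hE : ∀ t ω, 0 ≤ E t ω) :
    ∀ t (ω : Ω), B * uSeq q B E t ω ≤ bSeq q B E t ω
  | 0, ω => by simp [uSeq, bSeq]
  | 1, ω => by simp [uSeq, bSeq]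
  | (t+2), ω => by
      have ih := bSeq_ge_uSeq hB hq0 hq hE (t+1) ω
      obtain ⟨hu1, hu2⟩ := uSeq_bounds hB hq hE (t+1) ω
      have hminE : min (E (t+2) ω) B ≤ E (t+2) ω := min_le_left _ _
      have hBx : B * (min (E (t+2) ω) B / B) = min (E (t+2) ω) B := by
        field_simp
      show B * min ((1 - q) * uSeq q B E (t+1) ω + min (E (t+2) ω) B / B) 1
        ≤ min (bSeq q B E (t+1) ω - q * bSeq q B E (t+1) ω + E (t+2) ω) B
      rcases le_total ((1 - q) * uSeq q B E (t+1) ω + min (E (t+2) ω) B / B) 1 with h | h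
      · rw [min_eq_left h]
        refine le_min ?_ ?_
        · rw [mul_add, hBx]; nlinarith
        · calc B * ((1 - q) * uSeq q B E (t+1) ω + min (E (t+2) ω) B / B) ≤ B * 1 :=
                mul_le_mul_of_nonneg_left h hB.le
            _ = B := mul_one B
      · rw [min_eq_right h, mul_one]
        refine le_min ?_ (le_refl B)
        have : B * ((1 - q) * uSeq q B E (t+1) ω + min (E (t+2) ω) B / B) ≥ B * 1 :=
          mul_le_mul_of_nonneg_left h hB.le
        rw [mul_add, hBx] at this
        nlinarith

/-- decay bound: `-log u_t ≤ t * (-log (1-q))`. -/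
lemma uSeq_log_ge (hB : 0 < B) (hq0 : 0 ≤ q) (hq : q < 1) (hE : ∀ t ω, 0 ≤ E t ω) :
    ∀ t (ω : Ω), -Real.log (uSeq q B E t ω) ≤ t * (-Real.log (1 - q))
  | 0, ω => by simp [uSeq]
  | 1, ω => by
      simp only [uSeq, Real.log_one, neg_zero, Nat.cast_one, one_mul]
      have : Real.log (1 - q) ≤ 0 := Real.log_nonpos (by linarith) (by linarith)
      linarith
  | (t+2), ω => by
      have ih := uSeq_log_ge hB hq0 hq hE (t+1) ω
      obtain ⟨hu1, hu2⟩ := uSeq_bounds hB hq hE (t+1) ω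
      obtain ⟨hx0, hx1⟩ := xval_mem hB hE (t+2) ω
      have h1q : (0:ℝ) < 1 - q := by linarith
      have hstep : (1 - q) * uSeq q B E (t+1) ω ≤ uSeq q B E (t+2) ω := by
        show _ ≤ min ((1 - q) * uSeq q B E (t+1) ω + min (E (t+2) ω) B / B) 1
        refine le_min (by linarith) (by nlinarith)
      have hpos : 0 < (1 - q) * uSeq q B E (t+1) ω := by positivity
      have := Real.log_le_log hpos hstep
      rw [Real.log_mul h1q.ne' hu1.ne'] at this
      push_cast at ih ⊢
      linarith

/-- the key AM-GM step for the logarithmic potential. -/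
lemma wSeq_step (hB : 0 < B) (hq0 : 0 ≤ q) (hq : q < 1) (hE : ∀ t ω, 0 ≤ E t ω) (t : ℕ) (ω : Ω) :
    -Real.log (uSeq q B E (t+1) ω) ≤ (1 - min (E (t+1) ω) B / B)
      * (-Real.log (uSeq q B E t ω) + (-Real.log (1 - q))) := by
  obtain ⟨hu1, hu2⟩ := uSeq_bounds hB hq hE t ω
  obtain ⟨hu1', hu2'⟩ := uSeq_bounds hB hq hE (t+1) ω
  obtain ⟨hx0, hx1⟩ := xval_mem hB hE (t+1) ω
  set x := min (E (t+1) ω) B / B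
  have h1q : (0:ℝ) < 1 - q := by linarith
  have hpos : 0 < (1 - q) * uSeq q B E t ω := by positivity
  have hgm : ((1:ℝ)) ^ x * ((1 - q) * uSeq q B E t ω) ^ (1 - x)
      ≤ x * 1 + (1 - x) * ((1 - q) * uSeq q B E t ω) :=
    Real.geom_mean_le_arith_mean2_weighted hx0 (by linarith) zero_le_one hpos.le (by ring)
  rw [Real.one_rpow, one_mul, mul_one] at hgm
  have hstep := uSeq_step hB hq0 hq hE t ω
  have h2 : ((1 - q) * uSeq q B E t ω) ^ (1 - x) ≤ uSeq q B E (t+1) ω := le_trans hgm hstep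
  have h3 := Real.log_le_log (Real.rpow_pos_of_pos hpos _) h2
  rw [Real.log_rpow hpos, Real.log_mul h1q.ne' hu1.ne'] at h3
  refine le_trans (neg_le_neg h3) (le_of_eq (by ring))

variable [MeasurableSpace Ω] {P : Measure Ω}

lemma indep_uSeq (q B : ℝ) {E : ℕ → Ω → ℝ} (hEmeas : ∀ t, Measurable (E t))
    (hindep : iIndepFun E P) (t : ℕ) :
    IndepFun (uSeq q B E t) (E (t+1)) P := by
  have hdisj : Disjoint (Finset.range (t+1)) ({t+1} : Finset ℕ) := by
    simp [Finset.disjoint_singleton_right, Finset.mem_range]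
  have h0 := hindep.indepFun_finset (Finset.range (t+1)) {t+1} hdisj hEmeas
  have hφm : Measurable (fun v : ((i : (Finset.range (t+1) : Finset ℕ)) → ℝ) =>
      uFin q B (t+1) (fun i : Fin (t+1) => v ⟨i.1, Finset.mem_range.2 i.isLt⟩)) :=
    (uFin_measurable q B (t+1)).comp (measurable_pi_lambda _ fun _ => measurable_pi_apply _)
  have hψm : Measurable (fun v : ((i : ({t+1} : Finset ℕ)) → ℝ) =>
      v ⟨t+1, Finset.mem_singleton_self _⟩) := measurable_pi_apply _
  have h1 := h0.comp hφm hψm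
  have e1 : ((fun v : ((i : (Finset.range (t+1) : Finset ℕ)) → ℝ) =>
      uFin q B (t+1) (fun i : Fin (t+1) => v ⟨i.1, Finset.mem_range.2 i.isLt⟩))
      ∘ (fun a (i : (Finset.range (t+1) : Finset ℕ)) => E i a)) = uSeq q B E t := by
    funext a; exact (uSeq_eq_uFin q B E t a).symm
  have e2 : ((fun v : ((i : ({t+1} : Finset ℕ)) → ℝ) => v ⟨t+1, Finset.mem_singleton_self _⟩)
      ∘ (fun a (i : ({t+1} : Finset ℕ)) => E i a)) = E (t+1) := rfl
  rwa [e1, e2] at h1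

variable [IsProbabilityMeasure P] {p : ℝ}

lemma integrable_of_bounded {f : Ω → ℝ} (hf : Measurable f) (C : ℝ) (hC : ∀ ω, |f ω| ≤ C) :
    Integrable f P :=
  (integrable_const C).mono' hf.aestronglyMeasurable (ae_of_all _ hC)

lemma xval_integrable (hB : 0 < B) (hEmeas : ∀ t, Measurable (E t))
    (hEnn : ∀ t ω, 0 ≤ E t ω) (t : ℕ) :
    Integrable (fun ω => min (E t ω) B / B) P := by
  refine integrable_of_bounded (((hEmeas t).min measurable_const).div_const _) 1 fun ω => ?_
  obtain ⟨h1, h2⟩ := xval_mem hB hEnn t ω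
  rw [abs_le]; constructor <;> linarith

lemma uSeq_integrable (hB : 0 < B) (hq : q < 1) (hEmeas : ∀ t, Measurable (E t))
    (hEnn : ∀ t ω, 0 ≤ E t ω) (t : ℕ) : Integrable (uSeq q B E t) P := by
  refine integrable_of_bounded (uSeq_measurable q B hEmeas t) 1 fun ω => ?_
  obtain ⟨h1, h2⟩ := uSeq_bounds hB hq hEnn t ω
  rw [abs_le]; constructor <;> linarith

lemma wSeq_integrable (hB : 0 < B) (hq0 : 0 ≤ q) (hq : q < 1) (hEmeas : ∀ t, Measurable (E t))
    (hEnn : ∀ t ω, 0 ≤ E t ω) (t : ℕ) :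
    Integrable (fun ω => -Real.log (uSeq q B E t ω)) P := by
  have hc0 : 0 ≤ -Real.log (1 - q) := by
    have := Real.log_nonpos (by linarith) (by linarith : (1:ℝ) - q ≤ 1); linarith
  refine integrable_of_bounded ((Real.measurable_log.comp (uSeq_measurable q B hEmeas t)).neg)
    ((t : ℝ) * (-Real.log (1 - q))) fun ω => ?_
  obtain ⟨h1, h2⟩ := uSeq_bounds hB hq hEnn t ω
  have hw0 : 0 ≤ -Real.log (uSeq q B E t ω) := by
    have := Real.log_nonpos h1.le h2; linarith
  rw [abs_le]; constructor
  · have : (0:ℝ) ≤ (t : ℝ) * (-Real.log (1 - q)) :=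
      mul_nonneg (Nat.cast_nonneg t) hc0
    linarith
  · exact uSeq_log_ge hB hq0 hq hEnn t ω

/-- Average of `-log u_t` is at most `(1-p)c/p`. -/
lemma wSeq_integral_le (hB : 0 < B) (hq0 : 0 < q) (hq1 : q < 1)
    (hEmeas : ∀ t, Measurable (E t)) (hEnn : ∀ t ω, 0 ≤ E t ω)
    (hindep : iIndepFun E P)
    (hxp : ∀ t, (∫ ω, min (E t ω) B / B ∂P) = p) (hp0 : 0 < p) (hp1 : p ≤ 1) :
    ∀ t, (∫ ω, -Real.log (uSeq q B E t ω) ∂P) ≤ (1-p) * (-Real.log (1-q)) / p := by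
  set c : ℝ := -Real.log (1-q) with hc
  have h1q : (0:ℝ) < 1 - q := by linarith
  have hc0 : 0 ≤ c := by
    rw [hc]; have := Real.log_nonpos (by linarith) (by linarith : (1:ℝ) - q ≤ 1); linarith
  have hwint : ∀ t, Integrable (fun ω => -Real.log (uSeq q B E t ω)) P :=
    wSeq_integrable hB hq0.le hq1 hEmeas hEnn
  have hxint : ∀ t, Integrable (fun ω => 1 - min (E t ω) B / B) P := fun t =>
    (integrable_const 1).sub (xval_integrable hB hEmeas hEnn t)
  have hx1int : ∀ t, (∫ ω, (1 - min (E t ω) B / B) ∂P) = 1 - p := by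
    intro t
    rw [integral_sub (integrable_const 1) (xval_integrable hB hEmeas hEnn t), hxp t]
    simp
  have hstep : ∀ t, (∫ ω, -Real.log (uSeq q B E (t+1) ω) ∂P)
      ≤ (1-p) * ((∫ ω, -Real.log (uSeq q B E t ω) ∂P) + c) := by
    intro t
    have hwcint : Integrable (fun ω => -Real.log (uSeq q B E t ω) + c) P :=
      (hwint t).add (integrable_const c)
    have hIndep2 : IndepFun (fun ω => 1 - min (E (t+1) ω) B / B)
        (fun ω => -Real.log (uSeq q B E t ω) + c) P := by
      have h := ((indep_uSeq q B hEmeas hindep t).comp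
        (φ := fun y : ℝ => -Real.log y + c) (ψ := fun e : ℝ => 1 - min e B / B)
        ((Real.measurable_log.neg).add_const c)
        (measurable_const.sub ((measurable_id.min measurable_const).div_const _))).symm
      exact h
    have hprodint : Integrable
        (fun ω => (1 - min (E (t+1) ω) B / B) * (-Real.log (uSeq q B E t ω) + c)) P := by
      refine integrable_of_bounded ?_ (1 * ((t:ℝ)*c + c)) fun ω => ?_
      · exact ((measurable_const.sub (((hEmeas (t+1)).min measurable_const).div_const _)).mul
          (((Real.measurable_log.comp (uSeq_measurable q B hEmeas t)).neg).add_const c))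
      · obtain ⟨hx0, hx1⟩ := xval_mem hB hEnn (t+1) ω
        obtain ⟨hu1, hu2⟩ := uSeq_bounds hB hq1 hEnn t ω
        have hw0 : 0 ≤ -Real.log (uSeq q B E t ω) := by
          have := Real.log_nonpos hu1.le hu2; linarith
        have hwle := uSeq_log_ge hB hq0.le hq1 hEnn t ω
        rw [abs_le]; constructor
        · nlinarith [mul_nonneg (Nat.cast_nonneg t : (0:ℝ) ≤ t) hc0]
        · nlinarith [mul_nonneg (Nat.cast_nonneg t : (0:ℝ) ≤ t) hc0]
    have h1 : (∫ ω, -Real.log (uSeq q B E (t+1) ω) ∂P)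
        ≤ ∫ ω, (1 - min (E (t+1) ω) B / B) * (-Real.log (uSeq q B E t ω) + c) ∂P :=
      integral_mono (hwint (t+1)) hprodint (wSeq_step hB hq0.le hq1 hEnn t)
    have h2' : (∫ ω, (1 - min (E (t+1) ω) B / B) * (-Real.log (uSeq q B E t ω) + c) ∂P)
        = (∫ ω, (1 - min (E (t+1) ω) B / B) ∂P)
          * (∫ ω, (-Real.log (uSeq q B E t ω) + c) ∂P) :=
      hIndep2.integral_fun_mul_eq_mul_integral (hxint (t+1)).aestronglyMeasurable
        hwcint.aestronglyMeasurable
    rw [h2', hx1int (t+1)] at h1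
    rw [integral_add (hwint t) (integrable_const c), integral_const] at h1
    simpa using h1
  intro t
  induction t with
  | zero =>
      have h0 : (∫ ω, -Real.log (uSeq q B E 0 ω) ∂P) = 0 := by
        have : (fun ω : Ω => -Real.log (uSeq q B E 0 ω)) = fun _ => 0 := by
          funext ω; show -Real.log 1 = 0; simp
        rw [this, integral_zero]
      rw [h0]
      exact div_nonneg (mul_nonneg (by linarith) hc0) hp0.le
  | succ t ih =>
      have hp' : p ≠ 0 := ne_of_gt hp0
      have h := hstep t
      have h2 : (1-p) * ((∫ ω, -Real.log (uSeq q B E t ω) ∂P) + c)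
          ≤ (1-p) * ((1-p)*c/p + c) :=
        mul_le_mul_of_nonneg_left (by linarith) (by linarith)
      have h3 : (1-p)*c/p + c = c/p := by field_simp; ring
      have h4 : (1-p) * (c/p) = (1-p)*c/p := by ring
      rw [h3, h4] at h2
      exact le_trans h h2

/-- Average of `u_t` is at least `p/(p+q-pq)`. -/
lemma uSeq_integral_ge (hB : 0 < B) (hq0 : 0 < q) (hq1 : q < 1)
    (hEmeas : ∀ t, Measurable (E t)) (hEnn : ∀ t ω, 0 ≤ E t ω)
    (hindep : iIndepFun E P)
    (hxp : ∀ t, (∫ ω, min (E t ω) B / B ∂P) = p) (hp0 : 0 < p) (hp1 : p ≤ 1) :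
    ∀ t, p / (p + q - p*q) ≤ ∫ ω, uSeq q B E t ω ∂P := by
  have hden : 0 < p + q - p*q := by nlinarith
  have huint : ∀ t, Integrable (uSeq q B E t) P := uSeq_integrable hB hq1 hEmeas hEnn
  have hxint : ∀ t, Integrable (fun ω => 1 - min (E t ω) B / B) P := fun t =>
    (integrable_const 1).sub (xval_integrable hB hEmeas hEnn t)
  have hx1int : ∀ t, (∫ ω, (1 - min (E t ω) B / B) ∂P) = 1 - p := by
    intro t
    rw [integral_sub (integrable_const 1) (xval_integrable hB hEmeas hEnn t), hxp t]
    simp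
  have hstep : ∀ t, p + (1-p) * ((1-q) * (∫ ω, uSeq q B E t ω ∂P))
      ≤ ∫ ω, uSeq q B E (t+1) ω ∂P := by
    intro t
    have hIndep2 : IndepFun (fun ω => 1 - min (E (t+1) ω) B / B)
        (fun ω => (1-q) * uSeq q B E t ω) P := by
      exact ((indep_uSeq q B hEmeas hindep t).comp
        (φ := fun y : ℝ => (1-q) * y) (ψ := fun e : ℝ => 1 - min e B / B)
        (measurable_id.const_mul _)
        (measurable_const.sub ((measurable_id.min measurable_const).div_const _))).symm
    have hquint : Integrable (fun ω => (1-q) * uSeq q B E t ω) P := (huint t).const_mul _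
    have h2 : (∫ ω, (1 - min (E (t+1) ω) B / B) * ((1-q) * uSeq q B E t ω) ∂P)
        = (∫ ω, (1 - min (E (t+1) ω) B / B) ∂P) * (∫ ω, (1-q) * uSeq q B E t ω ∂P) :=
      hIndep2.integral_fun_mul_eq_mul_integral (hxint (t+1)).aestronglyMeasurable
        hquint.aestronglyMeasurable
    have hprodint : Integrable
        (fun ω => (1 - min (E (t+1) ω) B / B) * ((1-q) * uSeq q B E t ω)) P := by
      refine integrable_of_bounded ?_ 1 fun ω => ?_
      · exact ((measurable_const.sub (((hEmeas (t+1)).min measurable_const).div_const _)).mul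
          ((uSeq_measurable q B hEmeas t).const_mul _))
      · obtain ⟨hx0, hx1⟩ := xval_mem hB hEnn (t+1) ω
        obtain ⟨hu1, hu2⟩ := uSeq_bounds hB hq1 hEnn t ω
        have hnn : 0 ≤ (1 - min (E (t+1) ω) B / B) * ((1-q) * uSeq q B E t ω) :=
          mul_nonneg (by linarith) (mul_nonneg (by linarith) hu1.le)
        have hle1 : (1 - min (E (t+1) ω) B / B) * ((1-q) * uSeq q B E t ω) ≤ 1 :=
          mul_le_one₀ (by linarith) (mul_nonneg (by linarith) hu1.le) (by nlinarith)
        rw [abs_le]; constructor <;> linarith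
    have h1 : (∫ ω, (min (E (t+1) ω) B / B
          + (1 - min (E (t+1) ω) B / B) * ((1-q) * uSeq q B E t ω)) ∂P)
        ≤ ∫ ω, uSeq q B E (t+1) ω ∂P := by
      refine integral_mono ((xval_integrable hB hEmeas hEnn (t+1)).add hprodint)
        (huint (t+1)) fun ω => ?_
      exact uSeq_step hB hq0.le hq1 hEnn t ω
    rw [integral_add (xval_integrable hB hEmeas hEnn (t+1)) hprodint, hxp (t+1), h2,
      hx1int (t+1), integral_const_mul] at h1
    linarith
  intro t
  induction t with
  | zero =>
      have h0 : (∫ ω, uSeq q B E 0 ω ∂P) = 1 := by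
        have : (fun ω : Ω => uSeq q B E 0 ω) = fun _ => (1:ℝ) := rfl
        rw [this, integral_const]; simp
      rw [h0, div_le_one hden]
      nlinarith
  | succ t ih =>
      have h := hstep t
      have h2 : p + (1-p) * ((1-q) * (p / (p + q - p*q)))
          ≤ p + (1-p) * ((1-q) * (∫ ω, uSeq q B E t ω ∂P)) := by
        have : (0:ℝ) ≤ (1-p) * (1-q) := mul_nonneg (by linarith) (by linarith)
        nlinarith
      have h3 : p + (1-p) * ((1-q) * (p / (p + q - p*q))) = p / (p + q - p*q) := by
        field_simp; ring
      linarith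

end AuxDefs

set_option maxHeartbeats 4000000 in
/-- **Approximation of the optimal throughput.** For i.i.d. nonnegative arrivals `E`,
battery capacity `B > 0`, SNR `γ > 0`, and `μ = 𝔼[min (E 1) B] > 0`, the optimal
long-term average throughput `Θ` (the supremum over admissible online policies of the
liminf of `n`-horizon expected throughputs) satisfies
`½ log₂(1 + γ μ) - 1/(2 ln 2) ≤ Θ ≤ ½ log₂(1 + γ μ)` and
`Θ ≥ (1/2) ½ log₂(1 + γ μ)`. -/
theorem stmt_13 {Ω : Type*} [MeasurableSpace Ω] (P : Measure Ω) [IsProbabilityMeasure P]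
    (B γ : ℝ) (hB : 0 < B) (hγ : 0 < γ)
    (E : ℕ → Ω → ℝ) (hEmeas : ∀ t, Measurable (E t))
    (hEnn : ∀ t ω, 0 ≤ E t ω)
    (hindep : iIndepFun E P)
    (hident : ∀ t, IdentDistrib (E t) (E 1) P P)
    (μ : ℝ) (hμ : μ = ∫ ω, min (E 1 ω) B ∂P) (hμpos : 0 < μ)
    (Θ : ℝ)
    (hΘ : Θ = sSup {r : ℝ | ∃ g b : ℕ → Ω → ℝ,
        (∀ ω, b 1 ω = B) ∧
        (∀ t, 1 ≤ t → ∀ ω, b (t + 1) ω = min (b t ω - g t ω + E (t + 1) ω) B) ∧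
        (∀ t, 1 ≤ t → ∀ ω, 0 ≤ g t ω ∧ g t ω ≤ b t ω) ∧
        (∀ t, 1 ≤ t → ∃ h : (Fin t → ℝ) → ℝ, Measurable h ∧
          ∀ ω, g t ω = h (fun i => E (i.1 + 1) ω)) ∧
        r = liminf (fun n : ℕ => (1 / (n : ℝ)) * ∑ t ∈ Finset.Icc 1 n,
              ∫ ω, (1 / 2) * Real.logb 2 (1 + γ * g t ω) ∂P) atTop}) :
    ((1 / 2) * Real.logb 2 (1 + γ * μ) - 1 / (2 * Real.log 2) ≤ Θ ∧
      Θ ≤ (1 / 2) * Real.logb 2 (1 + γ * μ)) ∧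
    (1 / 2) * ((1 / 2) * Real.logb 2 (1 + γ * μ)) ≤ Θ := by
  subst hΘ
  set S : Set ℝ := {r : ℝ | ∃ g b : ℕ → Ω → ℝ,
        (∀ ω, b 1 ω = B) ∧
        (∀ t, 1 ≤ t → ∀ ω, b (t + 1) ω = min (b t ω - g t ω + E (t + 1) ω) B) ∧
        (∀ t, 1 ≤ t → ∀ ω, 0 ≤ g t ω ∧ g t ω ≤ b t ω) ∧
        (∀ t, 1 ≤ t → ∃ h : (Fin t → ℝ) → ℝ, Measurable h ∧
          ∀ ω, g t ω = h (fun i => E (i.1 + 1) ω)) ∧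
        r = liminf (fun n : ℕ => (1 / (n : ℝ)) * ∑ t ∈ Finset.Icc 1 n,
              ∫ ω, (1 / 2) * Real.logb 2 (1 + γ * g t ω) ∂P) atTop} with hSdef
  have hL2 : (0:ℝ) < Real.log 2 := Real.log_pos one_lt_two
  have hγμ : (0:ℝ) < 1 + γ * μ := by nlinarith
  set Λ : ℝ := Real.log (1 + γ * μ) with hΛdef
  have hΛpos : 0 < Λ := Real.log_pos (by nlinarith)
  have hLeq : (1 / 2) * Real.logb 2 (1 + γ * μ) = Λ / (2 * Real.log 2) := by
    rw [Real.logb, hΛdef]; ring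
  -- basic integrals of the truncated arrivals
  have hXint : ∀ t, Integrable (fun ω => min (E t ω) B) P := by
    intro t
    refine integrable_of_bounded ((hEmeas t).min measurable_const) B fun ω => ?_
    rw [abs_le]
    constructor
    · have h0 : 0 ≤ min (E t ω) B := le_min (hEnn t ω) hB.le
      linarith
    · exact min_le_right _ _
  have hXid : ∀ t, (∫ ω, min (E t ω) B ∂P) = μ := by
    intro t; rw [hμ]
    exact ((hident t).comp (measurable_id.min measurable_const)).integral_eq
  have hμB : μ ≤ B := by
    have h1 := integral_mono (μ := P) (hXint 1) (integrable_const B)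
      (fun ω => min_le_right (E 1 ω) B)
    rw [hμ]; simpa using h1
  set p : ℝ := μ / B with hpdef
  have hp0 : 0 < p := div_pos hμpos hB
  have hp1 : p ≤ 1 := by rw [hpdef, div_le_one hB]; exact hμB
  have hpB : p * B = μ := by rw [hpdef]; field_simp
  set q : ℝ := min p (4/5) with hqdef
  have hq0 : 0 < q := lt_min hp0 (by norm_num)
  have hqp : q ≤ p := min_le_left _ _
  have hq45 : q ≤ 4/5 := min_le_right _ _
  have hq1 : q < 1 := lt_of_le_of_lt hq45 (by norm_num)
  have hxp : ∀ t, (∫ ω, min (E t ω) B / B ∂P) = p := by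
    intro t; rw [integral_div, hXid t, hpdef]
  set c : ℝ := -Real.log (1 - q) with hcdef
  have hc0 : 0 ≤ c := by
    have := Real.log_nonpos (by linarith) (by linarith : (1:ℝ) - q ≤ 1)
    rw [hcdef]; linarith
  have hqB : 0 < 1 + γ * (q * B) := by nlinarith [mul_pos (mul_pos hγ hq0) hB]
  -- numeric case analysis
  have hgap : Λ - 1 ≤ Real.log (1 + γ * (q*B)) - (1-p)*c/p := by
    rcases le_total p (4/5) with hcase | hcase
    · -- q = p
      have hqe : q = p := by rw [hqdef]; exact min_eq_left hcase
      have h1p : (0:ℝ) < 1 - p := by linarith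
      have hlog : Real.log (1 + γ * (q*B)) = Λ := by
        rw [hqe, hpB, hΛdef]
      have hcle : c ≤ p / (1-p) := by
        have h2 := Real.log_le_sub_one_of_pos (show (0:ℝ) < (1-p)⁻¹ by positivity)
        rw [Real.log_inv] at h2
        have h3 : (1-p)⁻¹ - 1 = p / (1-p) := by field_simp; ring
        rw [hcdef, hqe]; linarith
      have h4 : (1-p)*c/p ≤ 1 := by
        rw [div_le_one hp0]
        calc (1-p)*c ≤ (1-p)*(p/(1-p)) := mul_le_mul_of_nonneg_left hcle h1p.le
          _ = p := by field_simp
      linarith [hlog]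
    · -- q = 4/5
      have hqe : q = 4/5 := by rw [hqdef]; exact min_eq_right hcase
      have hc3 : c ≤ 3 := by
        rw [hcdef, hqe]
        have h5 : -Real.log (1 - 4/5 : ℝ) = Real.log 5 := by
          rw [show (1 - 4/5 : ℝ) = 5⁻¹ by norm_num, Real.log_inv]; ring
        rw [h5]
        rw [Real.log_le_iff_le_exp (by norm_num)]
        have he2 : (2:ℝ) ≤ Real.exp 1 := by
          have := Real.add_one_le_exp 1; linarith
        have : Real.exp 3 = Real.exp 1 * Real.exp 1 * Real.exp 1 := by
          rw [← Real.exp_add, ← Real.exp_add]; norm_num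
        nlinarith [Real.exp_pos 1]
      have hfrac : (1-p)/p ≤ 1/4 := by
        rw [div_le_div_iff₀ hp0 (by norm_num)]
        linarith
      have hlog2 : Λ ≤ Real.log (1 + γ*(q*B)) + 1/4 := by
        have h6 : (1 + γ*μ) ≤ (5/4) * (1 + γ*(q*B)) := by
          rw [hqe]
          have : γ * μ ≤ γ * B := by nlinarith
          nlinarith
        have h7 := Real.log_le_log hγμ h6
        rw [Real.log_mul (by norm_num) hqB.ne'] at h7
        have h8 : Real.log (5/4 : ℝ) ≤ 1/4 := by
          have := Real.log_le_sub_one_of_pos (show (0:ℝ) < 5/4 by norm_num)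
          linarith
        rw [hΛdef]; linarith
      have h9 : (1-p)*c/p ≤ 3/4 := by
        have h10 : (1-p)*c/p = ((1-p)/p)*c := by ring
        rw [h10]
        calc ((1-p)/p)*c ≤ (1/4)*3 := by
              apply mul_le_mul hfrac hc3 hc0
              norm_num
          _ = 3/4 := by norm_num
      linarith
  have hden : 0 < p + q - p*q := by nlinarith
  have hhalf : 1/2 ≤ (q/p) * (p/(p+q-p*q)) := by
    have he : (q/p) * (p/(p+q-p*q)) = q/(p+q-p*q) := by
      field_simp
    rw [he, le_div_iff₀ hden]
    rcases le_total p (4/5) with hcase | hcase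
    · have hqe : q = p := by rw [hqdef]; exact min_eq_left hcase
      rw [hqe]; nlinarith [sq_nonneg p, hp0.le]
    · have hqe : q = 4/5 := by rw [hqdef]; exact min_eq_right hcase
      rw [hqe]; linarith
  -- integral facts for the policy
  have hWle := wSeq_integral_le hB hq0 hq1 hEmeas hEnn hindep hxp hp0 hp1
  have hAge := uSeq_integral_ge hB hq0 hq1 hEmeas hEnn hindep hxp hp0 hp1
  have hbmeas := bSeq_measurable q B hEmeas
  have humeas := uSeq_measurable q B hEmeas
  have hbbd := bSeq_bounds hB hq0.le hq1.le hEnn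
  have hubd := uSeq_bounds hB hq1 hEnn
  have hlogBnn : 0 ≤ Real.log (1 + γ * B) :=
    Real.log_nonneg (by nlinarith)
  have hlogint : ∀ t, Integrable (fun ω => Real.log (1 + γ * (q * bSeq q B E t ω))) P := by
    intro t
    refine integrable_of_bounded (Real.measurable_log.comp
      ((((hbmeas t).const_mul q).const_mul γ).const_add 1)) (Real.log (1 + γ*B)) fun ω => ?_
    obtain ⟨hb0, hbB⟩ := hbbd t ω
    have hqb_nn : 0 ≤ q * bSeq q B E t ω := mul_nonneg hq0.le hb0
    have hqb_le : q * bSeq q B E t ω ≤ B := by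
      nlinarith [mul_nonneg (sub_nonneg.2 hq1.le) hb0]
    have h1 : (0:ℝ) < 1 + γ * (q * bSeq q B E t ω) := by
      nlinarith [mul_nonneg hγ.le hqb_nn]
    have h2 : Real.log (1 + γ * (q * bSeq q B E t ω)) ≤ Real.log (1 + γ*B) :=
      Real.log_le_log h1 (by nlinarith [mul_le_mul_of_nonneg_left hqb_le hγ.le])
    have h3 : 0 ≤ Real.log (1 + γ * (q * bSeq q B E t ω)) :=
      Real.log_nonneg (by nlinarith [mul_nonneg hγ.le hqb_nn])
    rw [abs_le]; constructor <;> linarith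
  have hlogu_int : ∀ t, Integrable (fun ω => Real.log (uSeq q B E t ω)) P := by
    intro t
    refine ((wSeq_integrable (P := P) hB hq0.le hq1 hEmeas hEnn t).neg).congr
      (ae_of_all _ fun ω => ?_)
    simp
  -- per-slot reward lower bounds (in nats)
  have hR1 : ∀ t, Λ - 1 ≤ ∫ ω, Real.log (1 + γ * (q * bSeq q B E t ω)) ∂P := by
    intro t
    have hpt : ∀ ω, Real.log (1 + γ*(q*B)) + Real.log (uSeq q B E t ω)
        ≤ Real.log (1 + γ * (q * bSeq q B E t ω)) := by
      intro ω
      obtain ⟨hu0, hu1⟩ := hubd t ω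
      have hbu := bSeq_ge_uSeq hB hq0.le hq1 hEnn t ω
      have hpos : 0 < (1 + γ*(q*B)) * uSeq q B E t ω := by positivity
      have h1 : (1 + γ*(q*B)) * uSeq q B E t ω ≤ 1 + γ * (q * bSeq q B E t ω) := by
        have e2 : γ*(q*(B * uSeq q B E t ω)) ≤ γ*(q*bSeq q B E t ω) :=
          mul_le_mul_of_nonneg_left (mul_le_mul_of_nonneg_left hbu hq0.le) hγ.le
        nlinarith [e2]
      calc Real.log (1 + γ*(q*B)) + Real.log (uSeq q B E t ω)
          = Real.log ((1 + γ*(q*B)) * uSeq q B E t ω) :=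
            (Real.log_mul hqB.ne' hu0.ne').symm
        _ ≤ _ := Real.log_le_log hpos h1
    have h1 : ∫ ω, (Real.log (1 + γ*(q*B)) + Real.log (uSeq q B E t ω)) ∂P
        ≤ ∫ ω, Real.log (1 + γ * (q * bSeq q B E t ω)) ∂P :=
      integral_mono ((integrable_const _).add (hlogu_int t)) (hlogint t) hpt
    rw [integral_add (integrable_const _) (hlogu_int t), integral_const] at h1
    have h2 : (∫ ω, Real.log (uSeq q B E t ω) ∂P)
        = -∫ ω, -Real.log (uSeq q B E t ω) ∂P := by
      rw [← integral_neg]; simp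
    have h3 := hWle t
    have h4 : Λ - 1 ≤ Real.log (1 + γ*(q*B)) - (1-p)*c/p := hgap
    simp only [measure_univ, probReal_univ, ENNReal.toReal_one, smul_eq_mul, one_mul] at h1
    rw [h2] at h1
    linarith
  have hR2 : ∀ t, Λ/2 ≤ ∫ ω, Real.log (1 + γ * (q * bSeq q B E t ω)) ∂P := by
    intro t
    have hpt : ∀ ω, ((q/p) * Λ) * uSeq q B E t ω
        ≤ Real.log (1 + γ * (q * bSeq q B E t ω)) := by
      intro ω
      obtain ⟨hu0, hu1⟩ := hubd t ω
      have hbu := bSeq_ge_uSeq hB hq0.le hq1 hEnn t ω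
      set s : ℝ := (q/p) * uSeq q B E t ω with hsdef
      have hs0 : 0 ≤ s := mul_nonneg (div_nonneg hq0.le hp0.le) hu0.le
      have hs1 : s ≤ 1 := by
        rw [hsdef]
        calc (q/p) * uSeq q B E t ω ≤ (q/p) * 1 :=
              mul_le_mul_of_nonneg_left hu1 (div_nonneg hq0.le hp0.le)
          _ ≤ 1 := by rw [mul_one, div_le_one hp0]; exact hqp
      have hgm : (1 + γ*μ) ^ s * (1:ℝ) ^ (1-s) ≤ s * (1 + γ*μ) + (1-s) * 1 :=
        Real.geom_mean_le_arith_mean2_weighted hs0 (by linarith) hγμ.le zero_le_one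
          (by ring)
      rw [Real.one_rpow, mul_one, mul_one] at hgm
      have he1 : s * (1 + γ*μ) + (1-s) = 1 + γ * (q * (B * uSeq q B E t ω)) := by
        have : s * μ = q * (B * uSeq q B E t ω) := by
          rw [hsdef, ← hpB]; field_simp
        nlinarith [this]
      have he2 : 1 + γ * (q * (B * uSeq q B E t ω)) ≤ 1 + γ * (q * bSeq q B E t ω) := by
        have e2 : γ*(q*(B * uSeq q B E t ω)) ≤ γ*(q*bSeq q B E t ω) :=
          mul_le_mul_of_nonneg_left (mul_le_mul_of_nonneg_left hbu hq0.le) hγ.le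
        linarith
      have h3 := Real.log_le_log (Real.rpow_pos_of_pos hγμ s) (by linarith [hgm, he1, he2] :
        (1 + γ*μ) ^ s ≤ 1 + γ * (q * bSeq q B E t ω))
      rw [Real.log_rpow hγμ] at h3
      calc ((q/p) * Λ) * uSeq q B E t ω = s * Λ := by rw [hsdef]; ring
        _ ≤ _ := by rw [hΛdef]; exact h3
    have h1 : ∫ ω, ((q/p) * Λ) * uSeq q B E t ω ∂P
        ≤ ∫ ω, Real.log (1 + γ * (q * bSeq q B E t ω)) ∂P :=
      integral_mono ((uSeq_integrable hB hq1 hEmeas hEnn t).const_mul _) (hlogint t) hpt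
    rw [integral_const_mul] at h1
    have h2 : Λ/2 ≤ ((q/p) * Λ) * ∫ ω, uSeq q B E t ω ∂P := by
      have h3 := hAge t
      have h4 : ((q/p) * Λ) * (p/(p+q-p*q)) ≤ ((q/p) * Λ) * ∫ ω, uSeq q B E t ω ∂P :=
        mul_le_mul_of_nonneg_left h3 (mul_nonneg (div_nonneg hq0.le hp0.le) hΛpos.le)
      have h5 : Λ/2 ≤ ((q/p) * Λ) * (p/(p+q-p*q)) := by
        have h6 : (1/2) * Λ ≤ ((q/p) * (p/(p+q-p*q))) * Λ :=
          mul_le_mul_of_nonneg_right hhalf hΛpos.le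
        calc Λ/2 = (1/2) * Λ := by ring
          _ ≤ ((q/p) * (p/(p+q-p*q))) * Λ := h6
          _ = ((q/p) * Λ) * (p/(p+q-p*q)) := by ring
      linarith
    linarith
  -- per-slot quantities in bits
  have hIt_eq : ∀ (f : Ω → ℝ), (∫ ω, (1 / 2) * Real.logb 2 (1 + γ * f ω) ∂P)
      = (∫ ω, Real.log (1 + γ * f ω) ∂P) / (2 * Real.log 2) := by
    intro f
    rw [← integral_div]
    congr 1; funext ω
    rw [Real.logb]; ring
  have h2L2 : (0:ℝ) < 2 * Real.log 2 := by linarith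
  have hIt_lb1 : ∀ t, (Λ - 1) / (2*Real.log 2)
      ≤ ∫ ω, (1/2) * Real.logb 2 (1 + γ * (q * bSeq q B E t ω)) ∂P := by
    intro t
    rw [hIt_eq (fun ω => q * bSeq q B E t ω)]
    exact div_le_div_of_nonneg_right (hR1 t) h2L2.le
  have hIt_lb2 : ∀ t, (Λ/2) / (2*Real.log 2)
      ≤ ∫ ω, (1/2) * Real.logb 2 (1 + γ * (q * bSeq q B E t ω)) ∂P := by
    intro t
    rw [hIt_eq (fun ω => q * bSeq q B E t ω)]
    exact div_le_div_of_nonneg_right (hR2 t) h2L2.le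
  have hIt_ub : ∀ t, (∫ ω, (1/2) * Real.logb 2 (1 + γ * (q * bSeq q B E t ω)) ∂P)
      ≤ Real.log (1 + γ*B) / (2*Real.log 2) := by
    intro t
    rw [hIt_eq (fun ω => q * bSeq q B E t ω)]
    refine div_le_div_of_nonneg_right ?_ h2L2.le
    have h1 : (∫ ω, Real.log (1 + γ * (q * bSeq q B E t ω)) ∂P)
        ≤ ∫ ω, Real.log (1 + γ*B) ∂P := by
      refine integral_mono (hlogint t) (integrable_const _) fun ω => ?_
      obtain ⟨hb0, hbB⟩ := hbbd t ω
      have hqb_nn : 0 ≤ q * bSeq q B E t ω := mul_nonneg hq0.le hb0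
      have hqb_le : q * bSeq q B E t ω ≤ B := by
        nlinarith [mul_nonneg (sub_nonneg.2 hq1.le) hb0]
      refine Real.log_le_log (by nlinarith [mul_nonneg hγ.le hqb_nn]) ?_
      nlinarith [mul_le_mul_of_nonneg_left hqb_le hγ.le]
    simpa using h1
  -- membership of the fixed-fraction policy value
  set r0 : ℝ := liminf (fun n : ℕ => (1 / (n : ℝ)) * ∑ t ∈ Finset.Icc 1 n,
      ∫ ω, (1 / 2) * Real.logb 2 (1 + γ * (q * bSeq q B E t ω)) ∂P) atTop with hr0def
  have hmem : r0 ∈ S := by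
    rw [hSdef]
    refine ⟨fun t ω => q * bSeq q B E t ω, bSeq q B E, fun ω => rfl, ?_, ?_, ?_, rfl⟩
    · intro t ht ω
      cases t with
      | zero => omega
      | succ s =>
          show bSeq q B E (s+2) ω = _
          rfl
    · intro t ht ω
      obtain ⟨h0, h1⟩ := hbbd t ω
      show 0 ≤ q * bSeq q B E t ω ∧ q * bSeq q B E t ω ≤ bSeq q B E t ω
      refine ⟨mul_nonneg hq0.le h0, ?_⟩
      nlinarith [mul_nonneg (sub_nonneg.2 hq1.le) h0]
    · intro t ht
      refine ⟨fun e => q * bFin q B t e, (bFin_measurable q B t).const_mul q, fun ω => ?_⟩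
      show q * bSeq q B E t ω = _
      rw [bSeq_eq_bFin q B E t ω]
  -- liminf lower bound machinery
  have hTn_lb : ∀ m : ℝ,
      (∀ t, m ≤ ∫ ω, (1/2) * Real.logb 2 (1 + γ * (q * bSeq q B E t ω)) ∂P) → m ≤ r0 := by
    intro m hm
    rw [hr0def]
    refine le_liminf_of_le ?_ ?_
    · refine isCoboundedUnder_ge_of_le atTop (x := Real.log (1 + γ*B) / (2*Real.log 2)) ?_
      intro n
      rcases Nat.eq_zero_or_pos n with hn | hn
      · subst hn
        simp only [Nat.cast_zero, div_zero, zero_mul]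
        positivity
      · have hcard : (Finset.Icc 1 n).card = n := by rw [Nat.card_Icc]; omega
        have h1 : (∑ t ∈ Finset.Icc 1 n,
            ∫ ω, (1/2) * Real.logb 2 (1 + γ * (q * bSeq q B E t ω)) ∂P)
            ≤ (n:ℝ) * (Real.log (1 + γ*B) / (2*Real.log 2)) := by
          have := Finset.sum_le_card_nsmul (Finset.Icc 1 n)
            (fun t => ∫ ω, (1/2) * Real.logb 2 (1 + γ * (q * bSeq q B E t ω)) ∂P)
            (Real.log (1 + γ*B) / (2*Real.log 2)) (fun t _ => hIt_ub t)
          rw [hcard] at this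
          simpa [nsmul_eq_mul] using this
        have hn0 : (0:ℝ) < n := by exact_mod_cast hn
        calc (1/(n:ℝ)) * ∑ t ∈ Finset.Icc 1 n,
              ∫ ω, (1/2) * Real.logb 2 (1 + γ * (q * bSeq q B E t ω)) ∂P
            ≤ (1/(n:ℝ)) * ((n:ℝ) * (Real.log (1 + γ*B) / (2*Real.log 2))) :=
              mul_le_mul_of_nonneg_left h1 (by positivity)
          _ = Real.log (1 + γ*B) / (2*Real.log 2) := by field_simp
    · refine eventually_atTop.2 ⟨1, fun n hn => ?_⟩
      have hcard : (Finset.Icc 1 n).card = n := by rw [Nat.card_Icc]; omega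
      have h1 : (n:ℝ) * m ≤ ∑ t ∈ Finset.Icc 1 n,
          ∫ ω, (1/2) * Real.logb 2 (1 + γ * (q * bSeq q B E t ω)) ∂P := by
        have := Finset.card_nsmul_le_sum (Finset.Icc 1 n)
          (fun t => ∫ ω, (1/2) * Real.logb 2 (1 + γ * (q * bSeq q B E t ω)) ∂P)
          m (fun t _ => hm t)
        rw [hcard] at this
        simpa [nsmul_eq_mul] using this
      have hn0 : (0:ℝ) < n := by exact_mod_cast hn
      calc m = (1/(n:ℝ)) * ((n:ℝ) * m) := by field_simp
        _ ≤ _ := mul_le_mul_of_nonneg_left h1 (by positivity)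
  have hr0_lb1 : (Λ - 1) / (2*Real.log 2) ≤ r0 := hTn_lb _ hIt_lb1
  have hr0_lb2 : (Λ/2) / (2*Real.log 2) ≤ r0 := hTn_lb _ hIt_lb2
  -- upper bound for an arbitrary admissible policy
  have hub : ∀ r ∈ S, r ≤ Λ / (2*Real.log 2) := by
    rw [hSdef]
    rintro r ⟨g, b, hb1, hrec, hfeas, hmeasg, rfl⟩
    have hgmeas : ∀ t, 1 ≤ t → Measurable (g t) := by
      intro t ht
      obtain ⟨h, hm, heq⟩ := hmeasg t ht
      have he : g t = fun ω => h (fun i : Fin t => E (i.1+1) ω) := funext heq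
      rw [he]
      exact hm.comp (measurable_pi_lambda _ fun i => hEmeas _)
    have hble : ∀ t, 1 ≤ t → ∀ ω, b t ω ≤ B := by
      intro t ht
      induction t, ht using Nat.le_induction with
      | base => intro ω; exact le_of_eq (hb1 ω)
      | succ t ht ih => intro ω; rw [hrec t ht ω]; exact min_le_right _ _
    have hg0 : ∀ t, 1 ≤ t → ∀ ω, 0 ≤ g t ω := fun t ht ω => (hfeas t ht ω).1
    have hgB : ∀ t, 1 ≤ t → ∀ ω, g t ω ≤ B := fun t ht ω =>
      le_trans (hfeas t ht ω).2 (hble t ht ω)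
    have hbnn : ∀ t, 1 ≤ t → ∀ ω, 0 ≤ b t ω := fun t ht ω =>
      le_trans (hfeas t ht ω).1 (hfeas t ht ω).2
    have hsum_pt : ∀ n (ω : Ω), (∑ t ∈ Finset.Icc 1 n, g t ω) + b (n+1) ω
        ≤ B + ∑ t ∈ Finset.Icc 2 (n+1), min (E t ω) B := by
      intro n
      induction n with
      | zero =>
          intro ω
          rw [Finset.Icc_eq_empty (by omega), Finset.Icc_eq_empty (by omega)]
          simp [hb1 ω]
      | succ n ih =>
          intro ω
          rw [Finset.sum_Icc_succ_top (by omega : 1 ≤ n+1),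
            Finset.sum_Icc_succ_top (by omega : 2 ≤ n+1+1)]
          have h1 := hrec (n+1) (by omega) ω
          have hbg : 0 ≤ b (n+1) ω - g (n+1) ω := sub_nonneg.2 (hfeas (n+1) (by omega) ω).2
          have h2 : b (n+1+1) ω ≤ (b (n+1) ω - g (n+1) ω) + min (E (n+1+1) ω) B := by
            rw [h1]
            rcases le_total (E (n+1+1) ω) B with h | h
            · rw [min_eq_left h]
              exact min_le_left _ _
            · rw [min_eq_right h]
              have h3 := min_le_right (b (n+1) ω - g (n+1) ω + E (n+1+1) ω) B
              linarith
          have h3 := ih ω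
          linarith
    have hgint : ∀ t, 1 ≤ t → Integrable (g t) P := by
      intro t ht
      refine integrable_of_bounded (hgmeas t ht) B fun ω => ?_
      rw [abs_le]
      exact ⟨by linarith [hg0 t ht ω, hB], hgB t ht ω⟩
    have hGsum : ∀ n, (∑ t ∈ Finset.Icc 1 n, ∫ ω, g t ω ∂P) ≤ B + n*μ := by
      intro n
      have hgint' : ∀ t ∈ Finset.Icc 1 n, Integrable (g t) P :=
        fun t ht => hgint t (Finset.mem_Icc.1 ht).1
      have hint1 : Integrable (fun ω => ∑ t ∈ Finset.Icc 1 n, g t ω) P :=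
        integrable_finset_sum _ hgint'
      have hXint' : ∀ t ∈ Finset.Icc 2 (n+1), Integrable (fun ω => min (E t ω) B) P :=
        fun t _ => hXint t
      have hint2 : Integrable (fun ω => ∑ t ∈ Finset.Icc 2 (n+1), min (E t ω) B) P :=
        integrable_finset_sum _ hXint'
      have h1 : (∫ ω, (∑ t ∈ Finset.Icc 1 n, g t ω) ∂P)
          ≤ ∫ ω, (B + ∑ t ∈ Finset.Icc 2 (n+1), min (E t ω) B) ∂P := by
        refine integral_mono hint1 ((integrable_const B).add hint2) fun ω => ?_
        have h4 := hsum_pt n ω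
        have h5 := hbnn (n+1) (by omega) ω
        linarith
      rw [integral_finset_sum _ hgint'] at h1
      rw [integral_add (integrable_const B) hint2, integral_const,
        integral_finset_sum _ hXint'] at h1
      have h2 : (∑ t ∈ Finset.Icc 2 (n+1), ∫ ω, min (E t ω) B ∂P) = (n:ℝ) * μ := by
        rw [Finset.sum_congr rfl (fun t _ => hXid t), Finset.sum_const, Nat.card_Icc]
        have h6 : n + 1 + 1 - 2 = n := by omega
        rw [h6, nsmul_eq_mul]
      simp only [measure_univ, probReal_univ, ENNReal.toReal_one, smul_eq_mul, one_mul] at h1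
      rw [h2] at h1
      linarith
    have hloggint : ∀ t, 1 ≤ t → Integrable (fun ω => Real.log (1 + γ * g t ω)) P := by
      intro t ht
      refine integrable_of_bounded (Real.measurable_log.comp
        (((hgmeas t ht).const_mul γ).const_add 1)) (Real.log (1+γ*B)) fun ω => ?_
      have h0 := hg0 t ht ω
      have h1 := hgB t ht ω
      have hpos : (0:ℝ) < 1 + γ * g t ω := by nlinarith [mul_nonneg hγ.le h0]
      have h2 : Real.log (1 + γ * g t ω) ≤ Real.log (1+γ*B) :=
        Real.log_le_log hpos (by nlinarith [mul_le_mul_of_nonneg_left h1 hγ.le])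
      have h3 : 0 ≤ Real.log (1 + γ * g t ω) :=
        Real.log_nonneg (by nlinarith [mul_nonneg hγ.le h0])
      rw [abs_le]
      exact ⟨by linarith, h2⟩
    have hRub : ∀ t, 1 ≤ t → (∫ ω, Real.log (1 + γ * g t ω) ∂P)
        ≤ Λ + (γ/(1+γ*μ)) * ((∫ ω, g t ω ∂P) - μ) := by
      intro t ht
      have hpt : ∀ ω, Real.log (1 + γ * g t ω) ≤ Λ + (γ/(1+γ*μ)) * (g t ω - μ) := by
        intro ω
        have h0 := hg0 t ht ω
        have hpos : (0:ℝ) < 1 + γ * g t ω := by nlinarith [mul_nonneg hγ.le h0]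
        have hlt := Real.log_le_sub_one_of_pos (div_pos hpos hγμ)
        rw [Real.log_div hpos.ne' hγμ.ne'] at hlt
        have he : (1 + γ * g t ω)/(1 + γ*μ) - 1 = (γ/(1+γ*μ)) * (g t ω - μ) := by
          field_simp
          ring
        rw [hΛdef]
        linarith [hlt, he.le, he.ge]
      have hpt' : ∀ ω, Real.log (1 + γ * g t ω)
          ≤ (Λ - (γ/(1+γ*μ))*μ) + (γ/(1+γ*μ)) * g t ω := by
        intro ω
        have := hpt ω
        nlinarith [this]
      have h1 : (∫ ω, Real.log (1 + γ * g t ω) ∂P)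
          ≤ ∫ ω, ((Λ - (γ/(1+γ*μ))*μ) + (γ/(1+γ*μ)) * g t ω) ∂P :=
        integral_mono (hloggint t ht) ((integrable_const _).add
          ((hgint t ht).const_mul _)) hpt'
      rw [integral_add (integrable_const _) ((hgint t ht).const_mul _),
        integral_const, integral_const_mul] at h1
      simp only [measure_univ, probReal_univ, ENNReal.toReal_one, smul_eq_mul, one_mul] at h1
      have he2 : Λ + (γ/(1+γ*μ)) * ((∫ ω, g t ω ∂P) - μ)
          = (Λ - (γ/(1+γ*μ))*μ) + (γ/(1+γ*μ)) * (∫ ω, g t ω ∂P) := by ring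
      rw [he2]
      exact h1
    set K : ℝ := (γ/(1+γ*μ)) * B / (2*Real.log 2) with hKdef
    have hK0 : 0 ≤ K := by
      rw [hKdef]
      exact div_nonneg (mul_nonneg (div_nonneg hγ.le hγμ.le) hB.le) h2L2.le
    have hTub : ∀ n : ℕ, 1 ≤ n → (1/(n:ℝ)) * ∑ t ∈ Finset.Icc 1 n,
        (∫ ω, (1/2) * Real.logb 2 (1 + γ * g t ω) ∂P)
        ≤ Λ/(2*Real.log 2) + K * (1/(n:ℝ)) := by
      intro n hn
      have hcard : (Finset.Icc 1 n).card = n := by rw [Nat.card_Icc]; omega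
      have hn0 : (0:ℝ) < n := by exact_mod_cast hn
      have h1 : (∑ t ∈ Finset.Icc 1 n, ∫ ω, (1/2) * Real.logb 2 (1 + γ * g t ω) ∂P)
          ≤ ((n:ℝ) * Λ + (γ/(1+γ*μ)) * B) / (2*Real.log 2) := by
        have h2 : (∑ t ∈ Finset.Icc 1 n, ∫ ω, (1/2) * Real.logb 2 (1 + γ * g t ω) ∂P)
            ≤ ∑ t ∈ Finset.Icc 1 n,
              (Λ + (γ/(1+γ*μ)) * ((∫ ω, g t ω ∂P) - μ)) / (2*Real.log 2) := by
          refine Finset.sum_le_sum fun t ht => ?_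
          rw [hIt_eq (g t)]
          exact div_le_div_of_nonneg_right (hRub t (Finset.mem_Icc.1 ht).1) h2L2.le
        have h3 : (∑ t ∈ Finset.Icc 1 n,
              (Λ + (γ/(1+γ*μ)) * ((∫ ω, g t ω ∂P) - μ)) / (2*Real.log 2))
            = ((∑ t ∈ Finset.Icc 1 n, (Λ + (γ/(1+γ*μ)) * ((∫ ω, g t ω ∂P) - μ))))
              / (2*Real.log 2) := by
          rw [Finset.sum_div]
        have h4 : (∑ t ∈ Finset.Icc 1 n, (Λ + (γ/(1+γ*μ)) * ((∫ ω, g t ω ∂P) - μ)))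
            ≤ (n:ℝ) * Λ + (γ/(1+γ*μ)) * B := by
          rw [Finset.sum_add_distrib, Finset.sum_const, hcard, nsmul_eq_mul,
            ← Finset.mul_sum, Finset.sum_sub_distrib, Finset.sum_const, hcard, nsmul_eq_mul]
          have h5 : (∑ t ∈ Finset.Icc 1 n, ∫ ω, g t ω ∂P) - (n:ℝ) * μ ≤ B := by
            have := hGsum n
            linarith
          have h6 : (0:ℝ) ≤ γ/(1+γ*μ) := div_nonneg hγ.le hγμ.le
          nlinarith [mul_le_mul_of_nonneg_left h5 h6]
        rw [h3] at h2
        exact le_trans h2 (div_le_div_of_nonneg_right h4 h2L2.le)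
      calc (1/(n:ℝ)) * ∑ t ∈ Finset.Icc 1 n,
            (∫ ω, (1/2) * Real.logb 2 (1 + γ * g t ω) ∂P)
          ≤ (1/(n:ℝ)) * (((n:ℝ) * Λ + (γ/(1+γ*μ)) * B) / (2*Real.log 2)) :=
            mul_le_mul_of_nonneg_left h1 (by positivity)
        _ = Λ/(2*Real.log 2) + K * (1/(n:ℝ)) := by
            rw [hKdef]
            field_simp
    have hTnn : ∀ n : ℕ, 0 ≤ (1/(n:ℝ)) * ∑ t ∈ Finset.Icc 1 n,
        (∫ ω, (1/2) * Real.logb 2 (1 + γ * g t ω) ∂P) := by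
      intro n
      refine mul_nonneg (by positivity) (Finset.sum_nonneg fun t ht => ?_)
      refine integral_nonneg fun ω => ?_
      have h0 := hg0 t (Finset.mem_Icc.1 ht).1 ω
      exact mul_nonneg (by norm_num)
        (Real.logb_nonneg one_lt_two (by nlinarith [mul_nonneg hγ.le h0]))
    have h1 : liminf (fun n : ℕ => (1/(n:ℝ)) * ∑ t ∈ Finset.Icc 1 n,
        (∫ ω, (1/2) * Real.logb 2 (1 + γ * g t ω) ∂P)) atTop
        ≤ liminf (fun n : ℕ => Λ/(2*Real.log 2) + K * (1/(n:ℝ))) atTop := by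
      refine liminf_le_liminf ?_ ?_ ?_
      · exact eventually_atTop.2 ⟨1, fun n hn => hTub n hn⟩
      · exact isBoundedUnder_of ⟨0, fun n => hTnn n⟩
      · refine isCoboundedUnder_ge_of_le atTop (x := Λ/(2*Real.log 2) + K) fun n => ?_
        have h7 : K * (1/(n:ℝ)) ≤ K * 1 := by
          refine mul_le_mul_of_nonneg_left ?_ hK0
          rcases Nat.eq_zero_or_pos n with hn | hn
          · subst hn; norm_num
          · have hn0 : (1:ℝ) ≤ n := by exact_mod_cast hn
            rw [div_le_one (by linarith)]
            linarith
        linarith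
    have h2 : liminf (fun n : ℕ => Λ/(2*Real.log 2) + K * (1/(n:ℝ))) atTop
        = Λ/(2*Real.log 2) := by
      have h3 : Tendsto (fun n : ℕ => Λ/(2*Real.log 2) + K * (1/(n:ℝ))) atTop
          (nhds (Λ/(2*Real.log 2) + K * 0)) :=
        tendsto_const_nhds.add (tendsto_one_div_atTop_nhds_zero_nat.const_mul K)
      rw [mul_zero, add_zero] at h3
      exact h3.liminf_eq
    rw [h2] at h1
    exact h1
  -- conclusion
  have hbddS : BddAbove S := ⟨Λ/(2*Real.log 2), fun r hr => hub r hr⟩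
  have hr0S : r0 ≤ sSup S := le_csSup hbddS hmem
  have hsupub : sSup S ≤ Λ/(2*Real.log 2) := csSup_le ⟨r0, hmem⟩ hub
  refine ⟨⟨?_, ?_⟩, ?_⟩
  · have he : (1/2) * Real.logb 2 (1+γ*μ) - 1/(2*Real.log 2) = (Λ-1)/(2*Real.log 2) := by
      rw [hLeq]; ring
    rw [he]
    exact le_trans hr0_lb1 hr0S
  · rw [hLeq]
    exact hsupub
  · have he : (1/2) * ((1/2) * Real.logb 2 (1+γ*μ)) = (Λ/2)/(2*Real.log 2) := by
      rw [hLeq]; ring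
    rw [he]
    exact le_trans hr0_lb2 hr0S
end

section
/- Let (E_t)_{t≥1} be i.i.d. nonnegative random variables with E[E_1] > 0, B̄ > 0, γ > 0. Let g be an admissible online policy for initial battery level b_1 = B̄ with long-term average throughput R = liminf_{n→∞} T_n(g). Then for every ε > 0 there exists an admissible online policy g̃ for initial battery level b_1 = 0 whose long-term average throughput satisfies liminf_{n→∞} T_n(g̃) ≥ R − ε. Consequently, the optimal long-term average throughput does not depend on the initial battery level. -/
open MeasureTheory ProbabilityTheory Filter Finset

open scoped Topology ENNReal

namespace Stmt14Aux

/-- Simulated battery as a function of the arrival tuple, for policy functions `h`,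
starting full at `B`. `auxBB B h s v` is the battery at (relative) time `s` when the
arrivals were `v 0, ..., v (s-1)` (arrival at relative time `i+1` is `v i`). -/
def auxBB (B : ℝ) (h : (s : ℕ) → (Fin s → ℝ) → ℝ) : (s : ℕ) → (Fin s → ℝ) → ℝ
  | 0, _ => B
  | 1, _ => B
  | (s+2), v => min (auxBB B h (s+1) (Fin.init v) - h (s+1) (Fin.init v) + v (Fin.last (s+1))) B

lemma auxBB_succ (B : ℝ) (h : (s : ℕ) → (Fin s → ℝ) → ℝ) (s : ℕ) (hs : 1 ≤ s)
    (v : Fin (s+1) → ℝ) :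
    auxBB B h (s+1) v
      = min (auxBB B h s (Fin.init v) - h s (Fin.init v) + v (Fin.last s)) B := by
  obtain ⟨k, rfl⟩ := Nat.exists_eq_add_of_le' hs
  rfl

lemma auxBB_le (B : ℝ) (h : (s : ℕ) → (Fin s → ℝ) → ℝ) (hB : 0 ≤ B) :
    ∀ s v, auxBB B h s v ≤ B := by
  intro s v
  match s with
  | 0 => exact le_refl B
  | 1 => exact le_refl B
  | (s+2) => exact min_le_right _ _

lemma auxBB_measurable (B : ℝ) (h : (s : ℕ) → (Fin s → ℝ) → ℝ)
    (hh : ∀ s, Measurable (h s)) : ∀ s, Measurable (auxBB B h s) := by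
  intro s
  induction s with
  | zero => exact measurable_const
  | succ s ih =>
    match s, ih with
    | 0, _ => exact measurable_const
    | (s+1), ih =>
      have hinit : Measurable (fun v : Fin (s+2) → ℝ => Fin.init v) := by
        exact measurable_pi_lambda _ fun i => measurable_pi_apply _
      exact ((((ih.comp hinit).sub ((hh (s+1)).comp hinit)).add
        (measurable_pi_apply (Fin.last (s+1)))).min measurable_const)

/-- If `β` satisfies the battery recursion driven by arrivals `e` and policy functions `h`,
then `β s` is given by `auxBB` applied to the arrival tuple. -/
lemma auxBB_spec (B : ℝ) (h : (s : ℕ) → (Fin s → ℝ) → ℝ) (e : ℕ → ℝ) (β : ℕ → ℝ)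
    (hβ1 : β 1 = B)
    (hβ : ∀ s, 1 ≤ s → β (s+1) = min (β s - h s (fun i : Fin s => e (i.1 + 1)) + e (s+1)) B) :
    ∀ s, 1 ≤ s → β s = auxBB B h s (fun i : Fin s => e (i.1 + 1)) := by
  intro s hs
  induction s, hs using Nat.le_induction with
  | base => exact hβ1
  | succ s hs ih =>
    rw [auxBB_succ B h s hs]
    have h1 : (Fin.init fun i : Fin (s+1) => e (i.1 + 1)) = fun i : Fin s => e (i.1 + 1) := by
      funext i; simp [Fin.init, Fin.castSucc]
    rw [h1, ← ih, hβ s hs]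
    simp [Fin.last]

/-- The allocation of the constructed policy at time `t`, as a function of the current
battery level `bt` and the arrival tuple `v` (arrival at time `i+1` is `v i`).
It waits during slots `1, ..., ℓ+1`; afterwards, provided the battery filled up by time
`ℓ+2` (which is detected from arrivals `2, ..., ℓ+1`), it mimics the policy functions `h`
fed with the arrivals shifted by `ℓ+1`, clamped so as to stay admissible. -/
noncomputable def auxG' (B : ℝ) (ℓ : ℕ) (h : (s : ℕ) → (Fin s → ℝ) → ℝ) (t : ℕ) (bt : ℝ)
    (v : Fin t → ℝ) : ℝ :=
  if ht : ℓ + 2 ≤ t then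
    (if B ≤ ∑ i : Fin ℓ, v ⟨i.1 + 1, by omega⟩ then 1 else 0) *
      max 0 (min (h (t - ℓ - 1) (fun i : Fin (t - ℓ - 1) => v ⟨ℓ + 1 + i.1, by omega⟩))
        (min (auxBB B h (t - ℓ - 1) (fun i : Fin (t - ℓ - 1) => v ⟨ℓ + 1 + i.1, by omega⟩)) bt))
  else 0

/-- The battery process of the constructed policy, as a function of the arrival tuple. -/
noncomputable def auxB (B x : ℝ) (ℓ : ℕ) (h : (s : ℕ) → (Fin s → ℝ) → ℝ) : (t : ℕ) → (Fin t → ℝ) → ℝ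
  | 0, _ => x
  | 1, _ => x
  | (t+2), v => min (auxB B x ℓ h (t+1) (Fin.init v)
      - auxG' B ℓ h (t+1) (auxB B x ℓ h (t+1) (Fin.init v)) (Fin.init v)
      + v (Fin.last (t+1))) B

lemma auxB_succ (B x : ℝ) (ℓ : ℕ) (h : (s : ℕ) → (Fin s → ℝ) → ℝ) (t : ℕ) (ht : 1 ≤ t)
    (v : Fin (t+1) → ℝ) :
    auxB B x ℓ h (t+1) v = min (auxB B x ℓ h t (Fin.init v)
      - auxG' B ℓ h t (auxB B x ℓ h t (Fin.init v)) (Fin.init v) + v (Fin.last t)) B := by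
  obtain ⟨k, rfl⟩ := Nat.exists_eq_add_of_le' ht
  rfl

lemma auxG'_eq_zero (B : ℝ) (ℓ : ℕ) (h : (s : ℕ) → (Fin s → ℝ) → ℝ) (t : ℕ)
    (ht : t ≤ ℓ + 1) (bt : ℝ) (v : Fin t → ℝ) : auxG' B ℓ h t bt v = 0 := by
  rw [auxG', dif_neg (by omega)]

lemma auxG'_measurable (B : ℝ) (ℓ : ℕ) (h : (s : ℕ) → (Fin s → ℝ) → ℝ)
    (hh : ∀ s, Measurable (h s)) (t : ℕ) (bt : (Fin t → ℝ) → ℝ) (hbt : Measurable bt) :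
    Measurable (fun v => auxG' B ℓ h t (bt v) v) := by
  unfold auxG'
  by_cases ht : ℓ + 2 ≤ t
  · simp only [dif_pos ht]
    have hproj : Measurable (fun v : Fin t → ℝ =>
        (fun i : Fin (t - ℓ - 1) => v ⟨ℓ + 1 + i.1, by omega⟩)) :=
      measurable_pi_lambda _ fun i => measurable_pi_apply _
    have h1 : Measurable (fun v : Fin t → ℝ =>
        (if B ≤ ∑ i : Fin ℓ, v ⟨i.1 + 1, by omega⟩ then (1:ℝ) else 0)) := by
      refine Measurable.ite ?_ measurable_const measurable_const
      refine measurableSet_le measurable_const (Finset.measurable_sum _ fun i _ => ?_)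
      apply measurable_pi_apply
    refine h1.mul (measurable_const.max ?_)
    exact ((hh _).comp hproj).min (((auxBB_measurable B h hh _).comp hproj).min hbt)
  · simp only [dif_neg ht]; exact measurable_const

lemma auxB_measurable (B x : ℝ) (ℓ : ℕ) (h : (s : ℕ) → (Fin s → ℝ) → ℝ)
    (hh : ∀ s, Measurable (h s)) : ∀ t, Measurable (auxB B x ℓ h t) := by
  intro t
  induction t with
  | zero => exact measurable_const
  | succ t ih =>
    match t, ih with
    | 0, _ => exact measurable_const
    | (t+1), ih =>
      have hinit : Measurable (fun v : Fin (t+2) → ℝ => Fin.init v) :=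
        measurable_pi_lambda _ fun i => measurable_pi_apply _
      exact (((ih.comp hinit).sub
        ((auxG'_measurable B ℓ h hh (t+1) _ ih).comp hinit)).add
        (measurable_pi_apply (Fin.last (t+1)))).min measurable_const

/-- A generic battery recursion driven by a given allocation process. -/
noncomputable def auxRecB {Ω : Type*} (B x : ℝ) (g : ℕ → Ω → ℝ) (E : ℕ → Ω → ℝ) : ℕ → Ω → ℝ
  | 0, _ => x
  | 1, _ => x
  | (t+2), ω => min (auxRecB B x g E (t+1) ω - g (t+1) ω + E (t+2) ω) B

lemma auxRecB_succ {Ω : Type*} (B x : ℝ) (g E : ℕ → Ω → ℝ) (t : ℕ) (ht : 1 ≤ t) (ω : Ω) :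
    auxRecB B x g E (t+1) ω = min (auxRecB B x g E t ω - g t ω + E (t+1) ω) B := by
  obtain ⟨k, rfl⟩ := Nat.exists_eq_add_of_le' ht
  rfl

/-- `min (min a B + e) B = min (a + e) B` for `e ≥ 0`, `B` arbitrary. -/
lemma min_add_min (a B e : ℝ) (he : 0 ≤ e) : min (min a B + e) B = min (a + e) B := by
  rcases le_total a B with hab | hab
  · rw [min_eq_left hab]
  · rw [min_eq_right hab, min_eq_right (by linarith), min_eq_right (by linarith)]

/-- Bounds on any admissible battery process. -/
lemma battery_bounds {B x : ℝ} (hx : 0 ≤ x) (hxB : x ≤ B) {e g β : ℕ → ℝ}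
    (he : ∀ t, 0 ≤ e t) (hβ1 : β 1 = x)
    (hrec : ∀ t, 1 ≤ t → β (t+1) = min (β t - g t + e (t+1)) B)
    (hadm : ∀ t, 1 ≤ t → 0 ≤ g t ∧ g t ≤ β t) :
    ∀ t, 1 ≤ t → 0 ≤ β t ∧ β t ≤ B := by
  intro t ht
  induction t, ht using Nat.le_induction with
  | base => rw [hβ1]; exact ⟨hx, hxB⟩
  | succ t ht ih =>
    rw [hrec t ht]
    constructor
    · refine le_min ?_ (by linarith [ih.2])
      have := (hadm t ht).2
      have := he (t+1)
      linarith
    · exact min_le_right _ _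

section Law

variable {Ω : Type*} [MeasurableSpace Ω] (P : Measure Ω) [IsProbabilityMeasure P]
  (E : ℕ → Ω → ℝ)

lemma measurable_tuple (hEmeas : ∀ t, Measurable (E t)) (m s : ℕ) :
    Measurable (fun ω => fun i : Fin s => E (m + i.1 + 1) ω) :=
  measurable_pi_lambda _ fun i => hEmeas _

lemma map_tuple_eq_pi (hEmeas : ∀ t, Measurable (E t))
    (hindep : iIndepFun E P)
    (hident : ∀ t, IdentDistrib (E t) (E 1) P P) (m s : ℕ) :
    Measure.map (fun ω => fun i : Fin s => E (m + i.1 + 1) ω) P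
      = Measure.pi (fun _ : Fin s => Measure.map (E 1) P) := by
  haveI : IsProbabilityMeasure (Measure.map (E 1) P) :=
    Measure.isProbabilityMeasure_map (hEmeas 1).aemeasurable
  refine (Measure.pi_eq fun sfun hs => ?_).symm
  rw [Measure.map_apply (measurable_tuple E hEmeas m s) (MeasurableSet.univ_pi hs)]
  have hpre : (fun ω => fun i : Fin s => E (m + i.1 + 1) ω) ⁻¹' (Set.univ.pi sfun)
      = ⋂ i : Fin s, E (m + i.1 + 1) ⁻¹' sfun i := by
    ext ω; simp [Set.mem_pi]
  rw [hpre]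
  set setsN : ℕ → Set ℝ := fun t =>
    if h2 : m + 1 ≤ t ∧ t - m - 1 < s then sfun ⟨t - m - 1, h2.2⟩ else Set.univ with hsetsN
  have hkey : ∀ i : Fin s, setsN (m + i.1 + 1) = sfun i := by
    intro i
    have h2 : m + 1 ≤ m + i.1 + 1 ∧ m + i.1 + 1 - m - 1 < s := by
      constructor <;> [omega; (simp only [show m + i.1 + 1 - m - 1 = i.1 from by omega]; exact i.2)]
    rw [hsetsN]
    simp only [dif_pos h2]
    have hfin : (⟨m + i.1 + 1 - m - 1, h2.2⟩ : Fin s) = i := by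
      refine Fin.ext ?_
      show m + i.1 + 1 - m - 1 = i.1
      omega
    rw [hfin]
  have hSmeas : ∀ t, MeasurableSet (setsN t) := by
    intro t
    rw [hsetsN]
    by_cases h2 : m + 1 ≤ t ∧ t - m - 1 < s
    · simp only [dif_pos h2]; exact hs _
    · simp only [dif_neg h2]; exact MeasurableSet.univ
  have hinj : Function.Injective (fun i : Fin s => m + i.1 + 1) := by
    intro i j hij
    have h' : m + i.1 + 1 = m + j.1 + 1 := hij
    exact Fin.ext (by omega)
  have hInter : (⋂ i : Fin s, E (m + i.1 + 1) ⁻¹' sfun i)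
      = ⋂ t ∈ Finset.image (fun i : Fin s => m + i.1 + 1) Finset.univ, E t ⁻¹' setsN t := by
    ext ω
    simp only [Set.mem_iInter, Finset.mem_image, Finset.mem_univ, true_and]
    constructor
    · rintro H t ⟨i, rfl⟩
      rw [hkey i]; exact H i
    · intro H i
      have := H _ ⟨i, rfl⟩
      rwa [hkey i] at this
  rw [hInter, hindep.measure_inter_preimage_eq_mul _ (fun t _ => hSmeas t),
    Finset.prod_image (fun i _ j _ hij => hinj hij)]
  refine Finset.prod_congr rfl fun i _ => ?_
  rw [hkey i, ← (hident (m + i.1 + 1)).map_eq,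
    Measure.map_apply (hEmeas _) (hs i)]

lemma integral_tuple_shift (hEmeas : ∀ t, Measurable (E t))
    (hindep : iIndepFun E P)
    (hident : ∀ t, IdentDistrib (E t) (E 1) P P) (m s : ℕ)
    (F : (Fin s → ℝ) → ℝ) (hF : Measurable F) :
    ∫ ω, F (fun i : Fin s => E (m + i.1 + 1) ω) ∂P
      = ∫ ω, F (fun i : Fin s => E (i.1 + 1) ω) ∂P := by
  have h1 := MeasureTheory.integral_map (μ := P)
    (measurable_tuple E hEmeas m s).aemeasurable hF.aestronglyMeasurable
  have h2 := MeasureTheory.integral_map (μ := P)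
    (measurable_tuple E hEmeas 0 s).aemeasurable hF.aestronglyMeasurable
  rw [map_tuple_eq_pi P E hEmeas hindep hident m s] at h1
  rw [map_tuple_eq_pi P E hEmeas hindep hident 0 s] at h2
  have h3 := h1.symm.trans h2
  simpa using h3

end Law

section Bounds

variable {Ω : Type*} [MeasurableSpace Ω] (P : Measure Ω) [IsProbabilityMeasure P]

lemma throughput_measurable (γ : ℝ) {f : Ω → ℝ} (hf : Measurable f) :
    Measurable (fun ω => (1/2 : ℝ) * Real.logb 2 (1 + γ * f ω)) := by
  have : Measurable (fun ω => Real.log (1 + γ * f ω)) :=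
    Real.measurable_log.comp (measurable_const.add (hf.const_mul γ))
  simpa [Real.logb, div_eq_mul_inv, mul_comm, mul_assoc, mul_left_comm] using
    ((this.mul_const (Real.log 2)⁻¹).const_mul (1/2 : ℝ))

lemma throughput_bounds (B γ : ℝ) (hB : 0 < B) (hγ : 0 < γ) {f : Ω → ℝ}
    (hf : Measurable f) (h0 : ∀ ω, 0 ≤ f ω) (hb : ∀ ω, f ω ≤ B) :
    Integrable (fun ω => (1/2 : ℝ) * Real.logb 2 (1 + γ * f ω)) P ∧
    0 ≤ ∫ ω, (1/2 : ℝ) * Real.logb 2 (1 + γ * f ω) ∂P ∧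
    ∫ ω, (1/2 : ℝ) * Real.logb 2 (1 + γ * f ω) ∂P ≤ (1/2 : ℝ) * Real.logb 2 (1 + γ * B) := by
  have hpt0 : ∀ ω, 0 ≤ (1/2 : ℝ) * Real.logb 2 (1 + γ * f ω) := by
    intro ω
    have : (0:ℝ) ≤ Real.logb 2 (1 + γ * f ω) :=
      Real.logb_nonneg (by norm_num) (by nlinarith [h0 ω])
    linarith
  have hptC : ∀ ω, (1/2 : ℝ) * Real.logb 2 (1 + γ * f ω) ≤ (1/2 : ℝ) * Real.logb 2 (1 + γ * B) := by
    intro ω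
    have : Real.logb 2 (1 + γ * f ω) ≤ Real.logb 2 (1 + γ * B) := by
      exact Real.logb_le_logb_of_le (by norm_num) (by nlinarith [h0 ω]) (by nlinarith [hb ω])
    linarith
  have hmeas := throughput_measurable (Ω := Ω) γ hf
  have hint : Integrable (fun ω => (1/2 : ℝ) * Real.logb 2 (1 + γ * f ω)) P := by
    refine Integrable.mono' (integrable_const ((1/2 : ℝ) * Real.logb 2 (1 + γ * B))) 
      hmeas.aestronglyMeasurable ?_
    filter_upwards with ω
    rw [Real.norm_eq_abs, abs_of_nonneg (hpt0 ω)]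
    exact hptC ω
  refine ⟨hint, integral_nonneg hpt0, ?_⟩
  calc ∫ ω, (1/2 : ℝ) * Real.logb 2 (1 + γ * f ω) ∂P
      ≤ ∫ _ω, (1/2 : ℝ) * Real.logb 2 (1 + γ * B) ∂P :=
        integral_mono hint (integrable_const _) hptC
    _ = (1/2 : ℝ) * Real.logb 2 (1 + γ * B) := by simp

lemma exists_fill (B δ : ℝ) (hδ : 0 < δ) (E : ℕ → Ω → ℝ)
    (hEmeas : ∀ t, Measurable (E t)) (hEnn : ∀ t ω, 0 ≤ E t ω)
    (hindep : iIndepFun E P)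
    (hident : ∀ t, IdentDistrib (E t) (E 1) P P)
    (hEpos : 0 < ∫ ω, E 1 ω ∂P) (hEint : Integrable (E 1) P) :
    ∃ ℓ : ℕ, 1 - δ ≤ (P {ω | B ≤ ∑ i ∈ Finset.range ℓ, E (i+2) ω}).toReal := by
  set X : ℕ → Ω → ℝ := fun i => E (i+2) with hX
  have hident' : ∀ i, IdentDistrib (X i) (X 0) P P :=
    fun i => (hident (i+2)).trans (hident 2).symm
  have hint : Integrable (X 0) P := ((hident 2).integrable_iff).mpr hEint
  have hindep' : Pairwise (Function.onFun (IndepFun · · P) X) :=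
    fun i j hij => hindep.indepFun (by omega)
  have hμ : 0 < ∫ ω, X 0 ω ∂P := by
    rw [hX]
    rw [(hident 2).integral_eq]
    exact hEpos
  have hae := ProbabilityTheory.strong_law_ae_real X hint hindep' hident'
  set A : ℕ → Set Ω := fun ℓ => {ω | B ≤ ∑ i ∈ Finset.range ℓ, E (i+2) ω} with hA
  have hAmeas : ∀ ℓ, MeasurableSet (A ℓ) := fun ℓ =>
    measurableSet_le measurable_const (Finset.measurable_sum _ fun i _ => hEmeas _)
  have hmono : Monotone A := by
    intro ℓ ℓ' hll ω hω
    simp only [hA, Set.mem_setOf_eq] at hω ⊢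
    exact le_trans hω (Finset.sum_le_sum_of_subset_of_nonneg (Finset.range_subset_range.2 hll)
      (fun i _ _ => hEnn _ ω))
  have hunion : ∀ᵐ ω ∂P, ω ∈ ⋃ ℓ, A ℓ := by
    filter_upwards [hae] with ω hω
    simp only [Set.mem_iUnion]
    by_contra hcon
    push_neg at hcon
    have hlt : ∀ ℓ, ∑ i ∈ Finset.range ℓ, E (i+2) ω < B := by
      intro ℓ
      have := hcon ℓ
      simpa [hA] using this
    have hle : ∀ n : ℕ, (∑ i ∈ Finset.range n, X i ω) / n ≤ B / n := by
      intro n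
      rcases Nat.eq_zero_or_pos n with rfl | hn
      · simp
      · have hn' : (0:ℝ) < n := by exact_mod_cast hn
        exact (div_le_div_iff_of_pos_right hn').mpr (le_of_lt (hlt n))
    have hB0 : Tendsto (fun n : ℕ => B / (n:ℝ)) atTop (𝓝 0) :=
      tendsto_const_div_atTop_nhds_zero_nat B
    have hle' : ∫ ω', X 0 ω' ∂P ≤ 0 :=
      le_of_tendsto_of_tendsto' hω hB0 hle
    linarith
  have hP1 : P (⋃ ℓ, A ℓ) = 1 := by
    rw [← MeasureTheory.mem_ae_iff_prob_eq_one (MeasurableSet.iUnion hAmeas)]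
    exact hunion
  have htend : Tendsto (fun ℓ => P (A ℓ)) atTop (𝓝 (P (⋃ ℓ, A ℓ))) :=
    tendsto_measure_iUnion_atTop hmono
  rw [hP1] at htend
  have htend' : Tendsto (fun ℓ => (P (A ℓ)).toReal) atTop (𝓝 1) := by
    have h1 : (1 : ℝ≥0∞) ≠ ⊤ := by simp
    have := (ENNReal.tendsto_toReal h1).comp htend
    exact this
  have hev : ∀ᶠ ℓ in atTop, 1 - δ ≤ (P (A ℓ)).toReal :=
    htend'.eventually (eventually_ge_nhds (by linarith))
  exact hev.exists

end Bounds


set_option maxHeartbeats 1600000 in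
/-- **Core construction**: from any admissible online policy started at full battery `B`
with long-run throughput `r`, and any initial level `x ∈ [0, B]` and `ε > 0`, we construct
an admissible online policy started at `x` with long-run throughput at least `r - ε`:
wait until the battery provably filled up (which happens with probability close to one by
the strong law of large numbers), then mimic the given policy on the shifted arrivals. -/
lemma core {Ω : Type*} [MeasurableSpace Ω] (P : Measure Ω) [IsProbabilityMeasure P]
    (B γ : ℝ) (hB : 0 < B) (hγ : 0 < γ)
    (E : ℕ → Ω → ℝ) (hEmeas : ∀ t, Measurable (E t)) (hEnn : ∀ t ω, 0 ≤ E t ω)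
    (hindep : iIndepFun E P)
    (hident : ∀ t, IdentDistrib (E t) (E 1) P P)
    (hEpos : 0 < ∫ ω, E 1 ω ∂P) (hEint : Integrable (E 1) P)
    (x : ℝ) (hx0 : 0 ≤ x) (hxB : x ≤ B)
    (g b : ℕ → Ω → ℝ)
    (hb1 : ∀ ω, b 1 ω = B)
    (hbrec : ∀ t, 1 ≤ t → ∀ ω, b (t + 1) ω = min (b t ω - g t ω + E (t + 1) ω) B)
    (hadm : ∀ t, 1 ≤ t → ∀ ω, 0 ≤ g t ω ∧ g t ω ≤ b t ω)
    (honline : ∀ t, 1 ≤ t → ∃ h : (Fin t → ℝ) → ℝ, Measurable h ∧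
      ∀ ω, g t ω = h (fun i => E (i.1 + 1) ω))
    (r : ℝ)
    (hr : r = liminf (fun n : ℕ => (1 / (n : ℝ)) * ∑ t ∈ Finset.Icc 1 n,
        ∫ ω, (1 / 2) * Real.logb 2 (1 + γ * g t ω) ∂P) atTop)
    (ε : ℝ) (hε : 0 < ε) :
    ∃ gt bt : ℕ → Ω → ℝ,
      (∀ ω, bt 1 ω = x) ∧
      (∀ t, 1 ≤ t → ∀ ω, bt (t + 1) ω = min (bt t ω - gt t ω + E (t + 1) ω) B) ∧
      (∀ t, 1 ≤ t → ∀ ω, 0 ≤ gt t ω ∧ gt t ω ≤ bt t ω) ∧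
      (∀ t, 1 ≤ t → ∃ h : (Fin t → ℝ) → ℝ, Measurable h ∧
        ∀ ω, gt t ω = h (fun i => E (i.1 + 1) ω)) ∧
      r - ε ≤ liminf (fun n : ℕ => (1 / (n : ℝ)) * ∑ t ∈ Finset.Icc 1 n,
          ∫ ω, (1 / 2) * Real.logb 2 (1 + γ * gt t ω) ∂P) atTop := by
  classical
  -- the uniform bound on the one-slot throughput
  set C : ℝ := (1/2 : ℝ) * Real.logb 2 (1 + γ * B) with hC
  have hCpos : 0 < C := by
    have : 0 < Real.logb 2 (1 + γ * B) := Real.logb_pos (by norm_num) (by nlinarith)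
    rw [hC]; linarith
  -- the measurable policy functions of the given policy
  set hfun : (s : ℕ) → (Fin s → ℝ) → ℝ :=
    fun s => if hs : 1 ≤ s then (honline s hs).choose else fun _ => 0 with hhfun
  have hfun_meas : ∀ s, Measurable (hfun s) := by
    intro s
    rw [hhfun]
    by_cases hs : 1 ≤ s
    · simp only [dif_pos hs]; exact (honline s hs).choose_spec.1
    · simp only [dif_neg hs]; exact measurable_const
  have hfun_spec : ∀ s, 1 ≤ s → ∀ ω, g s ω = hfun s (fun i : Fin s => E (i.1 + 1) ω) := by
    intro s hs ω
    rw [hhfun]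
    simp only [dif_pos hs]
    exact (honline s hs).choose_spec.2 ω
  -- bounds on the given policy
  have hbBnd : ∀ t, 1 ≤ t → ∀ ω, 0 ≤ b t ω ∧ b t ω ≤ B := by
    intro t ht ω
    exact battery_bounds (le_of_lt hB) le_rfl (fun t => hEnn t ω) (hb1 ω)
      (fun t ht => hbrec t ht ω) (fun t ht => hadm t ht ω) t ht
  have hgBnd : ∀ t, 1 ≤ t → ∀ ω, 0 ≤ g t ω ∧ g t ω ≤ B := by
    intro t ht ω
    exact ⟨(hadm t ht ω).1, le_trans (hadm t ht ω).2 (hbBnd t ht ω).2⟩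
  have hgmeas : ∀ t, 1 ≤ t → Measurable (g t) := by
    intro t ht
    have : g t = fun ω => hfun t (fun i : Fin t => E (i.1 + 1) ω) := funext (hfun_spec t ht)
    rw [this]
    exact (hfun_meas t).comp (measurable_pi_lambda _ fun i => hEmeas _)
  -- the single-slot rewards of the given policy
  set J : ℕ → ℝ := fun t => ∫ ω, (1/2 : ℝ) * Real.logb 2 (1 + γ * g t ω) ∂P with hJdef
  have hJ : ∀ t, 1 ≤ t → 0 ≤ J t ∧ J t ≤ C := by
    intro t ht
    have := throughput_bounds P B γ hB hγ (hgmeas t ht)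
      (fun ω => (hgBnd t ht ω).1) (fun ω => (hgBnd t ht ω).2)
    exact ⟨this.2.1, this.2.2⟩
  set c : ℕ → ℝ := fun n => (1 / (n : ℝ)) * ∑ t ∈ Finset.Icc 1 n, J t with hcdef
  have hrlim : r = liminf c atTop := hr
  have hc0 : ∀ n, 0 ≤ c n := by
    intro n
    apply mul_nonneg (by positivity)
    exact Finset.sum_nonneg fun t htmem => (hJ t (Finset.mem_Icc.mp htmem).1).1
  have hcC : ∀ n, c n ≤ C := by
    intro n
    rcases Nat.eq_zero_or_pos n with rfl | hn
    · simp [hcdef]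
      positivity
    · have hsum : ∑ t ∈ Finset.Icc 1 n, J t ≤ n * C := by
        have := Finset.sum_le_card_nsmul (Finset.Icc 1 n) J C
          (fun t htmem => (hJ t (Finset.mem_Icc.mp htmem).1).2)
        rwa [Nat.card_Icc, nsmul_eq_mul, Nat.add_sub_cancel] at this
      have hn' : (0:ℝ) < n := by exact_mod_cast hn
      rw [hcdef]
      calc (1 / (n : ℝ)) * ∑ t ∈ Finset.Icc 1 n, J t ≤ (1 / (n : ℝ)) * (n * C) := by
            apply mul_le_mul_of_nonneg_left hsum (by positivity)
        _ = C := by field_simp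
  have hcobdd : IsCoboundedUnder (· ≥ ·) atTop c :=
    isCoboundedUnder_ge_of_le atTop hcC
  have hbddc : IsBoundedUnder (· ≥ ·) atTop c :=
    isBoundedUnder_of_eventually_ge (Eventually.of_forall hc0)
  have hr0 : 0 ≤ r := by
    rw [hrlim]
    exact le_liminf_of_le hcobdd (Eventually.of_forall hc0)
  have hrC : r ≤ C := by
    rw [hrlim]
    exact liminf_le_of_frequently_le (Frequently.of_forall hcC) hbddc
  -- choose the waiting time ℓ
  obtain ⟨ℓ, hℓ⟩ := exists_fill P B (ε / C) (by positivity) E hEmeas hEnn hindep hident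
    hEpos hEint
  set A : Set Ω := {ω | B ≤ ∑ i ∈ Finset.range ℓ, E (i+2) ω} with hAdef
  have hAmeas : MeasurableSet A :=
    measurableSet_le measurable_const (Finset.measurable_sum _ fun i _ => hEmeas _)
  set p : ℝ := (P A).toReal with hpdef
  have hp0 : 0 ≤ p := ENNReal.toReal_nonneg
  have hp1 : p ≤ 1 := by
    rw [hpdef]
    calc (P A).toReal ≤ (1 : ℝ≥0∞).toReal :=
          ENNReal.toReal_mono (by simp) prob_le_one
      _ = 1 := by simp
  have hpε : r - ε ≤ p * r := by
    have h1p : 1 - p ≤ ε / C := by linarith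
    have h2 : (1 - p) * r ≤ (ε / C) * C :=
      mul_le_mul h1p hrC hr0 (by positivity)
    rw [div_mul_cancel₀ _ (ne_of_gt hCpos)] at h2
    nlinarith
  -- the constructed policy
  set bt : ℕ → Ω → ℝ := fun t ω => auxB B x ℓ hfun t (fun i : Fin t => E (i.1 + 1) ω) with hbtdef
  set gt : ℕ → Ω → ℝ := fun t ω => auxG' B ℓ hfun t (bt t ω) (fun i : Fin t => E (i.1 + 1) ω)
    with hgtdef
  have hbt1 : ∀ ω, bt 1 ω = x := fun ω => rfl
  have hbtrec : ∀ t, 1 ≤ t → ∀ ω, bt (t + 1) ω = min (bt t ω - gt t ω + E (t + 1) ω) B := by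
    intro t ht ω
    rw [hbtdef]
    simp only
    rw [auxB_succ B x ℓ hfun t ht]
    have hinit : (Fin.init fun i : Fin (t+1) => E (i.1 + 1) ω)
        = fun i : Fin t => E (i.1 + 1) ω := by
      funext i; simp [Fin.init, Fin.castSucc]
    rw [hinit]
    rfl
  -- nonnegativity and admissibility
  have hgt_adm0 : ∀ t ω, 0 ≤ bt t ω → 0 ≤ gt t ω ∧ gt t ω ≤ bt t ω := by
    intro t ω hbt0
    rw [hgtdef]
    simp only [auxG']
    by_cases ht : ℓ + 2 ≤ t
    · rw [dif_pos ht]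
      set ind : ℝ := if B ≤ ∑ i : Fin ℓ, E ((⟨i.1+1, by omega⟩ : Fin t).1 + 1) ω then 1 else 0
        with hinddef
      have hind0 : 0 ≤ ind := by rw [hinddef]; split <;> norm_num
      have hind1 : ind ≤ 1 := by rw [hinddef]; split <;> norm_num
      set q : ℝ := max 0 (min (hfun (t - ℓ - 1) _) (min (auxBB B hfun (t - ℓ - 1) _) (bt t ω)))
        with hqdef
      constructor
      · exact mul_nonneg hind0 (le_max_left _ _)
      · calc ind * q ≤ 1 * q := by
              apply mul_le_mul_of_nonneg_right hind1 (le_max_left _ _)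
          _ = q := one_mul q
          _ ≤ bt t ω := by
              rw [hqdef]
              apply max_le hbt0
              exact le_trans (min_le_right _ _) (min_le_right _ _)
    · rw [dif_neg ht]
      exact ⟨le_refl 0, hbt0⟩
  have hbtBnd : ∀ t, 1 ≤ t → ∀ ω, 0 ≤ bt t ω ∧ bt t ω ≤ B := by
    intro t ht ω
    induction t, ht using Nat.le_induction with
    | base => rw [hbt1 ω]; exact ⟨hx0, hxB⟩
    | succ t ht ih =>
      rw [hbtrec t ht ω]
      have hg := hgt_adm0 t ω ih.1
      constructor
      · apply le_min _ (le_of_lt hB)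
        have := hEnn (t+1) ω
        linarith [hg.2]
      · exact min_le_right _ _
  have hgtadm : ∀ t, 1 ≤ t → ∀ ω, 0 ≤ gt t ω ∧ gt t ω ≤ bt t ω :=
    fun t ht ω => hgt_adm0 t ω (hbtBnd t ht ω).1
  -- online
  have hbtmeas : ∀ t, Measurable (bt t) := by
    intro t
    exact (auxB_measurable B x ℓ hfun hfun_meas t).comp
      (measurable_pi_lambda _ fun i => hEmeas _)
  have hgtonline : ∀ t, 1 ≤ t → ∃ h : (Fin t → ℝ) → ℝ, Measurable h ∧
      ∀ ω, gt t ω = h (fun i : Fin t => E (i.1 + 1) ω) := by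
    intro t ht
    refine ⟨fun v => auxG' B ℓ hfun t (auxB B x ℓ hfun t v) v, ?_, fun ω => rfl⟩
    exact auxG'_measurable B ℓ hfun hfun_meas t _ (auxB_measurable B x ℓ hfun hfun_meas t)
  -- zero allocation during the waiting phase
  have hgt0 : ∀ t, t ≤ ℓ + 1 → ∀ ω, gt t ω = 0 := by
    intro t ht ω
    rw [hgtdef]
    exact auxG'_eq_zero B ℓ hfun t ht _ _
  -- battery level during the waiting phase
  have hwait : ∀ t, 1 ≤ t → t ≤ ℓ + 2 → ∀ ω,
      bt t ω = min (x + ∑ i ∈ Finset.range (t-1), E (i+2) ω) B := by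
    intro t ht
    induction t, ht using Nat.le_induction with
    | base =>
      intro _ ω
      simp only [Nat.sub_self, Finset.range_zero, Finset.sum_empty, add_zero]
      rw [hbt1 ω, min_eq_left hxB]
    | succ t ht ih =>
      intro hle ω
      have ht1 : t ≤ ℓ + 1 := by omega
      rw [hbtrec t ht ω, hgt0 t ht1 ω, sub_zero, ih (by omega) ω,
        min_add_min _ _ _ (hEnn (t+1) ω)]
      congr 1
      have h1 : t + 1 - 1 = (t - 1) + 1 := by omega
      rw [h1, Finset.sum_range_succ]
      have h2 : t - 1 + 2 = t + 1 := by omega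
      rw [h2]
      ring
  -- on the event A the battery is full at time ℓ+2
  have hfull : ∀ ω, ω ∈ A → bt (ℓ+2) ω = B := by
    intro ω hA
    rw [hwait (ℓ+2) (by omega) le_rfl ω]
    apply min_eq_right
    have h1 : ∑ i ∈ Finset.range ℓ, E (i+2) ω ≤ ∑ i ∈ Finset.range (ℓ+2-1), E (i+2) ω := by
      apply Finset.sum_le_sum_of_subset_of_nonneg
        (Finset.range_subset_range.2 (by omega)) (fun i _ _ => hEnn _ ω)
    have h2 : B ≤ ∑ i ∈ Finset.range ℓ, E (i+2) ω := hA
    linarith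
  -- shifted quantities
  set hval : ℕ → Ω → ℝ := fun s ω => hfun s (fun i : Fin s => E (ℓ + 1 + i.1 + 1) ω) with hvaldef
  set bb : ℕ → Ω → ℝ := fun s ω => auxBB B hfun s (fun i : Fin s => E (ℓ + 1 + i.1 + 1) ω)
    with hbbdef
  have hbb_le : ∀ s ω, bb s ω ≤ B := fun s ω => auxBB_le B hfun (le_of_lt hB) s _
  -- the good event has full measure
  have hgood_ae : ∀ᵐ ω ∂P, ∀ s, 1 ≤ s → (0 ≤ hval s ω ∧ hval s ω ≤ bb s ω) := by
    rw [ae_all_iff]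
    intro s
    by_cases hs : 1 ≤ s
    · have hFmeas : MeasurableSet {v : Fin s → ℝ |
          ¬ (0 ≤ hfun s v ∧ hfun s v ≤ auxBB B hfun s v)} := by
        apply MeasurableSet.compl
        exact (measurableSet_le measurable_const (hfun_meas s)).inter
          (measurableSet_le (hfun_meas s) (auxBB_measurable B hfun hfun_meas s))
      have hzero : P ((fun ω => fun i : Fin s => E (ℓ + 1 + i.1 + 1) ω) ⁻¹'
          {v : Fin s → ℝ | ¬ (0 ≤ hfun s v ∧ hfun s v ≤ auxBB B hfun s v)}) = 0 := by
        have hmap : Measure.map (fun ω => fun i : Fin s => E (ℓ + 1 + i.1 + 1) ω) P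
            = Measure.map (fun ω => fun i : Fin s => E (0 + i.1 + 1) ω) P := by
          rw [map_tuple_eq_pi P E hEmeas hindep hident (ℓ+1) s,
            map_tuple_eq_pi P E hEmeas hindep hident 0 s]
        have h1 : P ((fun ω => fun i : Fin s => E (ℓ + 1 + i.1 + 1) ω) ⁻¹' _)
            = Measure.map (fun ω => fun i : Fin s => E (ℓ + 1 + i.1 + 1) ω) P
              {v : Fin s → ℝ | ¬ (0 ≤ hfun s v ∧ hfun s v ≤ auxBB B hfun s v)} :=
          (Measure.map_apply (measurable_tuple E hEmeas (ℓ+1) s) hFmeas).symm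
        rw [h1, hmap, Measure.map_apply (measurable_tuple E hEmeas 0 s) hFmeas]
        have hempty : (fun ω => fun i : Fin s => E (0 + i.1 + 1) ω) ⁻¹'
            {v : Fin s → ℝ | ¬ (0 ≤ hfun s v ∧ hfun s v ≤ auxBB B hfun s v)} = ∅ := by
          ext ω
          simp only [Set.mem_preimage, Set.mem_setOf_eq, Set.mem_empty_iff_false, iff_false,
            not_not]
          have htup : (fun i : Fin s => E (0 + i.1 + 1) ω) = fun i : Fin s => E (i.1 + 1) ω := by
            funext i; norm_num
          rw [htup, ← hfun_spec s hs ω]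
          have hbspec : b s ω = auxBB B hfun s (fun i : Fin s => E (i.1 + 1) ω) := by
            apply auxBB_spec B hfun (fun t => E t ω) (fun t => b t ω) (hb1 ω)
              (fun u hu => ?_) s hs
            show b (u+1) ω = min (b u ω - hfun u (fun i : Fin u => E (i.1+1) ω) + E (u+1) ω) B
            rw [hbrec u hu ω, hfun_spec u hu ω]
          rw [← hbspec]
          exact hadm s hs ω
        rw [hempty]
        simp
      rw [ae_iff]
      have hseteq : {ω | ¬ (1 ≤ s → (0 ≤ hval s ω ∧ hval s ω ≤ bb s ω))}
          = (fun ω => fun i : Fin s => E (ℓ + 1 + i.1 + 1) ω) ⁻¹'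
            {v : Fin s → ℝ | ¬ (0 ≤ hfun s v ∧ hfun s v ≤ auxBB B hfun s v)} := by
        ext ω
        simp only [Set.mem_setOf_eq, Set.mem_preimage]
        constructor
        · intro hcon
          exact fun hq => hcon (fun _ => hq)
        · intro hcon hcon2
          exact hcon (hcon2 hs)
      rw [hseteq]
      exact hzero
    · filter_upwards with ω hcon
      omega
  -- unfolding the constructed policy after the waiting phase
  have hgt_unfold : ∀ t, ℓ + 2 ≤ t → ∀ ω,
      gt t ω = (if B ≤ ∑ i ∈ Finset.range ℓ, E (i+2) ω then (1:ℝ) else 0) *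
        max 0 (min (hval (t - ℓ - 1) ω) (min (bb (t - ℓ - 1) ω) (bt t ω))) := by
    intro t ht ω
    rw [hgtdef]
    simp only [auxG']
    rw [dif_pos ht]
    have hcond : (B ≤ ∑ i : Fin ℓ, E ((⟨i.1+1, by omega⟩ : Fin t).1 + 1) ω)
        ↔ (B ≤ ∑ i ∈ Finset.range ℓ, E (i+2) ω) := by
      have : ∑ i : Fin ℓ, E ((⟨i.1+1, by omega⟩ : Fin t).1 + 1) ω
          = ∑ i ∈ Finset.range ℓ, E (i+2) ω := by
        rw [← Fin.sum_univ_eq_sum_range (fun i => E (i+2) ω) ℓ]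
      rw [this]
    have htup : (fun i : Fin (t - ℓ - 1) =>
          (fun j : Fin t => E (j.1 + 1) ω) (⟨ℓ + 1 + i.1, by omega⟩ : Fin t))
        = fun i : Fin (t - ℓ - 1) => E (ℓ + 1 + i.1 + 1) ω := rfl
    congr 1
    · exact if_congr hcond rfl rfl
  have hkey : ∀ ω, ω ∈ A → (∀ s, 1 ≤ s → (0 ≤ hval s ω ∧ hval s ω ≤ bb s ω)) →
      ∀ s, 1 ≤ s → bt (ℓ+1+s) ω = bb s ω ∧ gt (ℓ+1+s) ω = hval s ω := by
    intro ω hA hgood s hs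
    induction s, hs using Nat.le_induction with
    | base =>
      have hbtb : bt (ℓ+1+1) ω = bb 1 ω := by
        have : bb 1 ω = B := rfl
        rw [this]
        exact hfull ω hA
      refine ⟨hbtb, ?_⟩
      have hA' : B ≤ ∑ i ∈ Finset.range ℓ, E (i+2) ω := hA
      rw [hgt_unfold (ℓ+1+1) (by omega) ω]
      rw [if_pos hA']
      have h1 : ℓ + 1 + 1 - ℓ - 1 = 1 := by omega
      rw [h1, one_mul, hbtb]
      have hg1 := hgood 1 le_rfl
      rw [min_self, min_eq_left hg1.2, max_eq_right hg1.1]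
    | succ s hs ih =>
      have hrec := hbtrec (ℓ+1+s) (by omega) ω
      have hbtb : bt (ℓ+1+(s+1)) ω = bb (s+1) ω := by
        have hidx : ℓ+1+(s+1) = (ℓ+1+s)+1 := by omega
        rw [hidx, hrec, ih.1, ih.2]
        rw [hbbdef]
        simp only
        rw [auxBB_succ B hfun s hs]
        have hinit : (Fin.init fun i : Fin (s+1) => E (ℓ + 1 + i.1 + 1) ω)
            = fun i : Fin s => E (ℓ + 1 + i.1 + 1) ω := by
          funext i; simp [Fin.init, Fin.castSucc]
        rw [hinit]
        simp only [Fin.val_last]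
        rfl
      refine ⟨hbtb, ?_⟩
      have hA' : B ≤ ∑ i ∈ Finset.range ℓ, E (i+2) ω := hA
      rw [hgt_unfold (ℓ+1+(s+1)) (by omega) ω, if_pos hA']
      have h1 : ℓ + 1 + (s+1) - ℓ - 1 = s + 1 := by omega
      rw [h1, one_mul, hbtb]
      have hg1 := hgood (s+1) (by omega)
      rw [min_self, min_eq_left hg1.2, max_eq_right hg1.1]
  -- the integral identity after the waiting phase
  have hI : ∀ s, 1 ≤ s →
      (∫ ω, (1/2 : ℝ) * Real.logb 2 (1 + γ * gt (ℓ+1+s) ω) ∂P) = p * J s := by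
    intro s hs
    set q : Ω → ℝ := fun ω => max 0 (min (hval s ω) (bb s ω)) with hqdef
    have hq0 : ∀ ω, 0 ≤ q ω := fun ω => le_max_left _ _
    have hqB : ∀ ω, q ω ≤ B := by
      intro ω
      rw [hqdef]
      exact max_le (le_of_lt hB) (le_trans (min_le_right _ _) (hbb_le s ω))
    set f : Ω → ℝ := fun ω => (1/2 : ℝ) * Real.logb 2 (1 + γ * q ω) with hfdef
    set indA : Ω → ℝ := fun ω => if B ≤ ∑ i ∈ Finset.range ℓ, E (i+2) ω then 1 else 0
      with hinddef
    have hqmeas : Measurable q := by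
      apply measurable_const.max
      exact Measurable.min
        ((hfun_meas s).comp (measurable_tuple E hEmeas (ℓ+1) s))
        ((auxBB_measurable B hfun hfun_meas s).comp (measurable_tuple E hEmeas (ℓ+1) s))
    have hfmeas : Measurable f := throughput_measurable γ hqmeas
    have hindmeas : Measurable indA := by
      apply Measurable.ite _ measurable_const measurable_const
      exact measurableSet_le measurable_const (Finset.measurable_sum _ fun i _ => hEmeas _)
    -- Step 1: a.e. identification of the integrands
    have hstep1 : ∫ ω, (1/2 : ℝ) * Real.logb 2 (1 + γ * gt (ℓ+1+s) ω) ∂P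
        = ∫ ω, indA ω * f ω ∂P := by
      apply integral_congr_ae
      filter_upwards [hgood_ae] with ω hgood
      by_cases hA : B ≤ ∑ i ∈ Finset.range ℓ, E (i+2) ω
      · have hk := hkey ω hA hgood s hs
        have hqval : q ω = hval s ω := by
          rw [hqdef]
          simp only
          rw [min_eq_left (hgood s hs).2, max_eq_right (hgood s hs).1]
        rw [hk.2, hinddef]
        simp only [if_pos hA, one_mul, hfdef, hqval]
      · have hz : gt (ℓ+1+s) ω = 0 := by
          rw [hgt_unfold (ℓ+1+s) (by omega) ω, if_neg hA, zero_mul]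
        rw [hz, hinddef]
        simp [if_neg hA]
    -- Step 2: independence of the indicator and the shifted reward
    have hdisj : Disjoint (Finset.Icc 2 (ℓ+1)) (Finset.Icc (ℓ+2) (ℓ+1+s)) := by
      rw [Finset.disjoint_left]
      intro a haS haT
      rw [Finset.mem_Icc] at haS haT
      omega
    have hbase := hindep.indepFun_finset (Finset.Icc 2 (ℓ+1)) (Finset.Icc (ℓ+2) (ℓ+1+s))
      hdisj hEmeas
    set φ : ({i // i ∈ Finset.Icc 2 (ℓ+1)} → ℝ) → ℝ := fun v =>
      if B ≤ ∑ i : Fin ℓ, v ⟨i.1+2, by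
        have h2 := i.2
        rw [Finset.mem_Icc]
        omega⟩ then (1:ℝ) else 0 with hφdef
    set ψ : ({i // i ∈ Finset.Icc (ℓ+2) (ℓ+1+s)} → ℝ) → ℝ := fun v =>
      (1/2 : ℝ) * Real.logb 2 (1 + γ * max 0
        (min (hfun s (fun i : Fin s => v ⟨ℓ+1+i.1+1, by
            have h2 := i.2
            rw [Finset.mem_Icc]
            omega⟩))
          (auxBB B hfun s (fun i : Fin s => v ⟨ℓ+1+i.1+1, by
            have h2 := i.2
            rw [Finset.mem_Icc]
            omega⟩)))) with hψdef
    have hφmeas : Measurable φ := by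
      rw [hφdef]
      apply Measurable.ite _ measurable_const measurable_const
      apply measurableSet_le measurable_const
      apply Finset.measurable_sum
      intro i _
      apply measurable_pi_apply
    have hψmeas : Measurable ψ := by
      rw [hψdef]
      apply throughput_measurable
      apply measurable_const.max
      refine Measurable.min ((hfun_meas s).comp ?_) ((auxBB_measurable B hfun hfun_meas s).comp ?_)
        <;> exact measurable_pi_lambda _ fun i => measurable_pi_apply _
    have hindA_eq : indA = φ ∘ (fun a (i : {i // i ∈ Finset.Icc 2 (ℓ+1)}) => E i a) := by
      funext ω
      rw [hinddef, hφdef]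
      simp only [Function.comp_apply]
      apply if_congr _ rfl rfl
      have hsum : ∑ i : Fin ℓ, E (i.1+2) ω = ∑ i ∈ Finset.range ℓ, E (i+2) ω :=
        Fin.sum_univ_eq_sum_range (fun i => E (i+2) ω) ℓ
      rw [← hsum]
    have hf_eq : f = ψ ∘ (fun a (i : {i // i ∈ Finset.Icc (ℓ+2) (ℓ+1+s)}) => E i a) := by
      funext ω
      rfl
    have hIndep : IndepFun indA f P := by
      rw [hindA_eq, hf_eq]
      exact hbase.comp hφmeas hψmeas
    -- Step 3: factorize the integral
    have hmul : ∫ ω, indA ω * f ω ∂P = (∫ ω, indA ω ∂P) * (∫ ω, f ω ∂P) := by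
      have := hIndep.integral_mul_eq_mul_integral hindmeas.aestronglyMeasurable hfmeas.aestronglyMeasurable
      simpa using this
    -- Step 4: the indicator integrates to p
    have hindint : ∫ ω, indA ω ∂P = p := by
      have heq : indA = A.indicator (fun _ => (1:ℝ)) := by
        funext ω
        rw [hinddef, Set.indicator_apply]
        exact if_congr Iff.rfl rfl rfl
      rw [heq, integral_indicator_const _ hAmeas]
      simp [hpdef, measureReal_def]
    -- Step 5: equidistribution of the shifted reward
    have hfint : ∫ ω, f ω ∂P = J s := by
      set F : (Fin s → ℝ) → ℝ := fun v =>
        (1/2 : ℝ) * Real.logb 2 (1 + γ * max 0 (min (hfun s v) (auxBB B hfun s v))) with hFdef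
      have hFmeas : Measurable F := by
        rw [hFdef]
        apply throughput_measurable
        exact measurable_const.max ((hfun_meas s).min (auxBB_measurable B hfun hfun_meas s))
      have hshift := integral_tuple_shift P E hEmeas hindep hident (ℓ+1) s F hFmeas
      have hL : ∫ ω, f ω ∂P = ∫ ω, F (fun i : Fin s => E (ℓ+1+i.1+1) ω) ∂P := rfl
      rw [hL, hshift, hJdef]
      apply integral_congr_ae
      filter_upwards with ω
      rw [hFdef]
      simp only
      rw [← hfun_spec s hs ω]
      have hbspec : auxBB B hfun s (fun i : Fin s => E (i.1 + 1) ω) = b s ω := by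
        symm
        apply auxBB_spec B hfun (fun t => E t ω) (fun t => b t ω) (hb1 ω)
          (fun u hu => ?_) s hs
        show b (u+1) ω = min (b u ω - hfun u (fun i : Fin u => E (i.1+1) ω) + E (u+1) ω) B
        rw [hbrec u hu ω, hfun_spec u hu ω]
      rw [hbspec, min_eq_left (hadm s hs ω).2, max_eq_right (hadm s hs ω).1]
    rw [hstep1, hmul, hindint, hfint]
  -- single-slot rewards of the constructed policy
  set It : ℕ → ℝ := fun t => ∫ ω, (1/2 : ℝ) * Real.logb 2 (1 + γ * gt t ω) ∂P with hItdef
  have hgtmeas : ∀ t, 1 ≤ t → Measurable (gt t) := by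
    intro t ht
    obtain ⟨h, hmeas, hspec⟩ := hgtonline t ht
    have : gt t = fun ω => h (fun i : Fin t => E (i.1 + 1) ω) := funext hspec
    rw [this]
    exact hmeas.comp (measurable_pi_lambda _ fun i => hEmeas _)
  have hItBnd : ∀ t, 1 ≤ t → 0 ≤ It t ∧ It t ≤ C := by
    intro t ht
    have := throughput_bounds P B γ hB hγ (hgtmeas t ht)
      (fun ω => (hgtadm t ht ω).1)
      (fun ω => le_trans (hgtadm t ht ω).2 (hbtBnd t ht ω).2)
    exact ⟨this.2.1, this.2.2⟩
  have hIt1 : ∀ t, 1 ≤ t → t ≤ ℓ+1 → It t = 0 := by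
    intro t _ ht
    rw [hItdef]
    simp only
    have hz : ∀ ω, (1/2 : ℝ) * Real.logb 2 (1 + γ * gt t ω) = 0 := by
      intro ω
      rw [hgt0 t ht ω]
      simp [Real.logb_one]
    simp only [hz]
    exact integral_zero Ω ℝ
  have hIt2 : ∀ t, ℓ+2 ≤ t → It t = p * J (t - ℓ - 1) := by
    intro t ht
    have hs : 1 ≤ t - ℓ - 1 := by omega
    have := hI (t - ℓ - 1) hs
    rwa [show ℓ+1+(t-ℓ-1) = t from by omega] at this
  -- the partial sums
  have hsum : ∀ n, ∑ t ∈ Finset.Icc 1 n, It t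
      = p * ∑ u ∈ Finset.Icc 1 (n - (ℓ+1)), J u := by
    intro n
    induction n with
    | zero => simp
    | succ n ih =>
      rw [Finset.sum_Icc_succ_top (by omega : 1 ≤ n+1), ih]
      by_cases hn : n+1 ≤ ℓ+1
      · rw [hIt1 (n+1) (by omega) hn, add_zero,
          show n+1 - (ℓ+1) = n - (ℓ+1) from by omega]
      · push_neg at hn
        rw [hIt2 (n+1) (by omega),
          show n+1 - (ℓ+1) = (n - (ℓ+1)) + 1 from by omega,
          Finset.sum_Icc_succ_top (by omega : 1 ≤ n - (ℓ+1) + 1), mul_add,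
          show (n+1) - ℓ - 1 = n - (ℓ+1) + 1 from by omega]
  set a : ℕ → ℝ := fun n => (1/(n:ℝ)) * ∑ t ∈ Finset.Icc 1 n, It t with hadef
  have ha0 : ∀ n, 0 ≤ a n := by
    intro n
    apply mul_nonneg (by positivity)
    exact Finset.sum_nonneg fun t htmem => (hItBnd t (Finset.mem_Icc.mp htmem).1).1
  have haC : ∀ n, a n ≤ C := by
    intro n
    rcases Nat.eq_zero_or_pos n with rfl | hn
    · simp [hadef]
      positivity
    · have hsumC : ∑ t ∈ Finset.Icc 1 n, It t ≤ n * C := by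
        have := Finset.sum_le_card_nsmul (Finset.Icc 1 n) It C
          (fun t htmem => (hItBnd t (Finset.mem_Icc.mp htmem).1).2)
        rwa [Nat.card_Icc, nsmul_eq_mul, Nat.add_sub_cancel] at this
      have hn' : (0:ℝ) < n := by exact_mod_cast hn
      rw [hadef]
      calc (1/(n:ℝ)) * ∑ t ∈ Finset.Icc 1 n, It t ≤ (1/(n:ℝ)) * (n * C) :=
            mul_le_mul_of_nonneg_left hsumC (by positivity)
        _ = C := by field_simp
  -- prefix-sum lower bound
  have hprefix : ∀ n, 1 ≤ n → p * c n - ((ℓ+1 : ℝ) * C) / n ≤ a n := by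
    intro n hn
    have hn' : (0:ℝ) < n := by exact_mod_cast hn
    have hm : n - (ℓ+1) ≤ n := by omega
    have hsub : Finset.Icc 1 (n - (ℓ+1)) ⊆ Finset.Icc 1 n :=
      Finset.Icc_subset_Icc_right (by exact_mod_cast hm)
    have hdiffsum : ∑ t ∈ Finset.Icc 1 n \ Finset.Icc 1 (n-(ℓ+1)), J t ≤ ((ℓ+1 : ℝ)) * C := by
      have hcard : (Finset.Icc 1 n \ Finset.Icc 1 (n-(ℓ+1))).card ≤ ℓ+1 := by
        rw [Finset.card_sdiff_of_subset hsub, Nat.card_Icc, Nat.card_Icc]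
        omega
      have h1 := Finset.sum_le_card_nsmul (Finset.Icc 1 n \ Finset.Icc 1 (n-(ℓ+1))) J C
        (fun t htmem => by
          have ht1 := (Finset.mem_Icc.mp (Finset.mem_sdiff.mp htmem).1).1
          exact (hJ t ht1).2)
      calc ∑ t ∈ Finset.Icc 1 n \ Finset.Icc 1 (n-(ℓ+1)), J t
          ≤ (Finset.Icc 1 n \ Finset.Icc 1 (n-(ℓ+1))).card • C := h1
        _ ≤ ((ℓ+1 : ℝ)) * C := by
            rw [nsmul_eq_mul]
            apply mul_le_mul_of_nonneg_right _ (le_of_lt hCpos)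
            exact_mod_cast hcard
    have hdiff0 : 0 ≤ ∑ t ∈ Finset.Icc 1 n \ Finset.Icc 1 (n-(ℓ+1)), J t :=
      Finset.sum_nonneg fun t htmem => by
        have ht1 := (Finset.mem_Icc.mp (Finset.mem_sdiff.mp htmem).1).1
        exact (hJ t ht1).1
    have hsplit : ∑ t ∈ Finset.Icc 1 (n-(ℓ+1)), J t
        = ∑ t ∈ Finset.Icc 1 n, J t
          - ∑ t ∈ Finset.Icc 1 n \ Finset.Icc 1 (n-(ℓ+1)), J t := by
      rw [eq_sub_iff_add_eq, Finset.sum_sdiff_eq_sub hsub]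
      ring
    rw [hadef]
    simp only
    rw [hsum n, hsplit, hcdef]
    simp only
    set Sn : ℝ := ∑ t ∈ Finset.Icc 1 n, J t
    set D : ℝ := ∑ t ∈ Finset.Icc 1 n \ Finset.Icc 1 (n-(ℓ+1)), J t
    have hpD : p * D ≤ ((ℓ+1 : ℝ)) * C := le_trans (by nlinarith) hdiffsum
    have hkey2 : (1/(n:ℝ)) * (p * (Sn - D)) - (p * ((1/(n:ℝ)) * Sn) - (((ℓ+1 : ℝ)) * C)/n)
        = (1/(n:ℝ)) * ((((ℓ+1 : ℝ)) * C) - p * D) := by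
      field_simp
      ring
    nlinarith [mul_nonneg (le_of_lt (one_div_pos.mpr hn')) (sub_nonneg.mpr hpD)]
  -- conclusion
  refine ⟨gt, bt, hbt1, hbtrec, hgtadm, hgtonline, ?_⟩
  have hfin : p * r ≤ liminf a atTop := by
    apply le_of_forall_pos_le_add
    intro δ hδ
    have hlt : r - δ/2 < liminf c atTop := by
      rw [← hrlim]; linarith
    have hevc : ∀ᶠ n in atTop, r - δ/2 < c n :=
      eventually_lt_of_lt_liminf hlt hbddc
    have hevK : ∀ᶠ n : ℕ in atTop, (((ℓ+1):ℝ) * C)/(n:ℝ) < δ/2 :=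
      (tendsto_const_div_atTop_nhds_zero_nat (((ℓ+1):ℝ) * C)).eventually
        (eventually_lt_nhds (by positivity))
    have hev1 : ∀ᶠ n : ℕ in atTop, 1 ≤ n := eventually_ge_atTop 1
    have hev : ∀ᶠ n in atTop, p * r - δ ≤ a n := by
      filter_upwards [hevc, hevK, hev1] with n h1 h2 h3
      have h4 := hprefix n h3
      nlinarith [hp0, hp1]
    have h5 := le_liminf_of_le (isCoboundedUnder_ge_of_le atTop haC) hev
    linarith
  have hgoal : (fun n : ℕ => (1 / (n : ℝ)) * ∑ t ∈ Finset.Icc 1 n,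
      ∫ ω, (1 / 2 : ℝ) * Real.logb 2 (1 + γ * gt t ω) ∂P) = a := rfl
  rw [hgoal]
  linarith [hpε, hfin]






/-- Any admissible policy has long-run throughput at most `(1/2) logb 2 (1 + γB)`. -/
lemma policy_liminf_le {Ω : Type*} [MeasurableSpace Ω] (P : Measure Ω) [IsProbabilityMeasure P]
    (B γ : ℝ) (hB : 0 < B) (hγ : 0 < γ)
    (E : ℕ → Ω → ℝ) (hEmeas : ∀ t, Measurable (E t)) (hEnn : ∀ t ω, 0 ≤ E t ω)
    (y : ℝ) (hy0 : 0 ≤ y) (hyB : y ≤ B)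
    (g' b' : ℕ → Ω → ℝ)
    (hb1' : ∀ ω, b' 1 ω = y)
    (hbrec' : ∀ t, 1 ≤ t → ∀ ω, b' (t + 1) ω = min (b' t ω - g' t ω + E (t + 1) ω) B)
    (hadm' : ∀ t, 1 ≤ t → ∀ ω, 0 ≤ g' t ω ∧ g' t ω ≤ b' t ω)
    (honline' : ∀ t, 1 ≤ t → ∃ h : (Fin t → ℝ) → ℝ, Measurable h ∧
      ∀ ω, g' t ω = h (fun i => E (i.1 + 1) ω)) :
    liminf (fun n : ℕ => (1 / (n : ℝ)) * ∑ t ∈ Finset.Icc 1 n,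
        ∫ ω, (1 / 2) * Real.logb 2 (1 + γ * g' t ω) ∂P) atTop
      ≤ (1/2 : ℝ) * Real.logb 2 (1 + γ * B) := by
  set C : ℝ := (1/2 : ℝ) * Real.logb 2 (1 + γ * B) with hC
  have hCpos : 0 < C := by
    have : 0 < Real.logb 2 (1 + γ * B) := Real.logb_pos (by norm_num) (by nlinarith)
    rw [hC]; linarith
  have hbBnd : ∀ t, 1 ≤ t → ∀ ω, 0 ≤ b' t ω ∧ b' t ω ≤ B := by
    intro t ht ω
    exact battery_bounds hy0 hyB (fun t => hEnn t ω) (hb1' ω)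
      (fun t ht => hbrec' t ht ω) (fun t ht => hadm' t ht ω) t ht
  have hgmeas : ∀ t, 1 ≤ t → Measurable (g' t) := by
    intro t ht
    obtain ⟨h, hmeas, hspec⟩ := honline' t ht
    have : g' t = fun ω => h (fun i : Fin t => E (i.1 + 1) ω) := funext hspec
    rw [this]
    exact hmeas.comp (measurable_pi_lambda _ fun i => hEmeas _)
  set J : ℕ → ℝ := fun t => ∫ ω, (1/2 : ℝ) * Real.logb 2 (1 + γ * g' t ω) ∂P with hJdef
  have hJ : ∀ t, 1 ≤ t → 0 ≤ J t ∧ J t ≤ C := by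
    intro t ht
    have := throughput_bounds P B γ hB hγ (hgmeas t ht)
      (fun ω => (hadm' t ht ω).1)
      (fun ω => le_trans (hadm' t ht ω).2 (hbBnd t ht ω).2)
    exact ⟨this.2.1, this.2.2⟩
  have hc0 : ∀ n : ℕ, 0 ≤ (1 / (n : ℝ)) * ∑ t ∈ Finset.Icc 1 n, J t := by
    intro n
    apply mul_nonneg (by positivity)
    exact Finset.sum_nonneg fun t htmem => (hJ t (Finset.mem_Icc.mp htmem).1).1
  have hcC : ∀ n : ℕ, (1 / (n : ℝ)) * ∑ t ∈ Finset.Icc 1 n, J t ≤ C := by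
    intro n
    rcases Nat.eq_zero_or_pos n with rfl | hn
    · simp
      positivity
    · have hsum : ∑ t ∈ Finset.Icc 1 n, J t ≤ n * C := by
        have := Finset.sum_le_card_nsmul (Finset.Icc 1 n) J C
          (fun t htmem => (hJ t (Finset.mem_Icc.mp htmem).1).2)
        rwa [Nat.card_Icc, nsmul_eq_mul, Nat.add_sub_cancel] at this
      have hn' : (0:ℝ) < n := by exact_mod_cast hn
      calc (1 / (n : ℝ)) * ∑ t ∈ Finset.Icc 1 n, J t ≤ (1 / (n : ℝ)) * (n * C) :=
            mul_le_mul_of_nonneg_left hsum (by positivity)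
        _ = C := by field_simp
  exact liminf_le_of_frequently_le (Frequently.of_forall hcC)
    (isBoundedUnder_of_eventually_ge (Eventually.of_forall hc0))

/-- The zero policy is admissible from any initial level `y ∈ [0, B]` and has zero
throughput. -/
lemma zero_policy {Ω : Type*} [MeasurableSpace Ω] (P : Measure Ω) [IsProbabilityMeasure P]
    (B γ : ℝ) (hB : 0 < B) (hγ : 0 < γ)
    (E : ℕ → Ω → ℝ) (hEnn : ∀ t ω, 0 ≤ E t ω)
    (y : ℝ) (hy0 : 0 ≤ y) (hyB : y ≤ B) :
    ∃ g' b' : ℕ → Ω → ℝ,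
      (∀ ω, b' 1 ω = y) ∧
      (∀ t, 1 ≤ t → ∀ ω, b' (t + 1) ω = min (b' t ω - g' t ω + E (t + 1) ω) B) ∧
      (∀ t, 1 ≤ t → ∀ ω, 0 ≤ g' t ω ∧ g' t ω ≤ b' t ω) ∧
      (∀ t, 1 ≤ t → ∃ h : (Fin t → ℝ) → ℝ, Measurable h ∧
        ∀ ω, g' t ω = h (fun i => E (i.1 + 1) ω)) ∧
      (0 : ℝ) = liminf (fun n : ℕ => (1 / (n : ℝ)) * ∑ t ∈ Finset.Icc 1 n,
            ∫ ω, (1 / 2) * Real.logb 2 (1 + γ * g' t ω) ∂P) atTop := by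
  refine ⟨fun _ _ => 0, fun t ω => min (y + ∑ j ∈ Finset.Icc 2 t, E j ω) B, ?_, ?_, ?_, ?_, ?_⟩
  · intro ω
    simp only [show Finset.Icc 2 1 = (∅ : Finset ℕ) from rfl, Finset.sum_empty, add_zero]
    exact min_eq_left hyB
  · intro t ht ω
    show (y + ∑ j ∈ Finset.Icc 2 (t+1), E j ω) ⊓ B
      = ((y + ∑ j ∈ Finset.Icc 2 t, E j ω) ⊓ B - 0 + E (t+1) ω) ⊓ B
    rw [sub_zero, min_add_min _ _ _ (hEnn (t+1) ω)]
    congr 1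
    rw [Finset.sum_Icc_succ_top (by omega : 2 ≤ t + 1)]
    ring
  · intro t ht ω
    refine ⟨le_refl 0, ?_⟩
    show (0:ℝ) ≤ (y + ∑ j ∈ Finset.Icc 2 t, E j ω) ⊓ B
    refine le_min ?_ (le_of_lt hB)
    have : 0 ≤ ∑ j ∈ Finset.Icc 2 t, E j ω := Finset.sum_nonneg fun j _ => hEnn j ω
    linarith
  · intro t ht
    exact ⟨fun _ => 0, measurable_const, fun ω => rfl⟩
  · have hz : (fun n : ℕ => (1 / (n : ℝ)) * ∑ t ∈ Finset.Icc 1 n,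
        ∫ ω, (1 / 2 : ℝ) * Real.logb 2 (1 + γ * (fun (_ : ℕ) (_ : Ω) => (0:ℝ)) t ω) ∂P)
        = fun _ => (0:ℝ) := by
      funext n
      simp [Real.logb_one]
    rw [hz, liminf_const]

end Stmt14Aux


open Stmt14Aux in
/-- **The throughput does not depend on the initial battery level.** Let `E` be i.i.d.
nonnegative arrivals with `𝔼[E 1] > 0`, `B > 0`, `γ > 0`. If `g` is an admissible online
policy for initial battery level `B` achieving long-term average throughput `R`, then for
every `ε > 0` there is an admissible online policy for initial battery level `0` whose
long-term average throughput is at least `R - ε`. Consequently, the optimal long-term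
average throughput `sSup (S x)` is the same for every initial battery level
`x ∈ [0, B]`. -/
theorem stmt_14 {Ω : Type*} [MeasurableSpace Ω] (P : Measure Ω) [IsProbabilityMeasure P]
    (B γ : ℝ) (hB : 0 < B) (hγ : 0 < γ)
    (E : ℕ → Ω → ℝ) (hEmeas : ∀ t, Measurable (E t))
    (hEnn : ∀ t ω, 0 ≤ E t ω)
    (hindep : iIndepFun E P)
    (hident : ∀ t, IdentDistrib (E t) (E 1) P P)
    (hEpos : 0 < ∫ ω, E 1 ω ∂P) (hEint : Integrable (E 1) P)
    (g b : ℕ → Ω → ℝ)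
    (hb1 : ∀ ω, b 1 ω = B)
    (hbrec : ∀ t, 1 ≤ t → ∀ ω, b (t + 1) ω = min (b t ω - g t ω + E (t + 1) ω) B)
    (hadm : ∀ t, 1 ≤ t → ∀ ω, 0 ≤ g t ω ∧ g t ω ≤ b t ω)
    (honline : ∀ t, 1 ≤ t → ∃ h : (Fin t → ℝ) → ℝ, Measurable h ∧
      ∀ ω, g t ω = h (fun i => E (i.1 + 1) ω))
    (R : ℝ)
    (hR : R = liminf (fun n : ℕ => (1 / (n : ℝ)) * ∑ t ∈ Finset.Icc 1 n,
        ∫ ω, (1 / 2) * Real.logb 2 (1 + γ * g t ω) ∂P) atTop)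
    (S : ℝ → Set ℝ)
    (hS : ∀ x : ℝ, S x = {r : ℝ | ∃ g' b' : ℕ → Ω → ℝ,
        (∀ ω, b' 1 ω = x) ∧
        (∀ t, 1 ≤ t → ∀ ω, b' (t + 1) ω = min (b' t ω - g' t ω + E (t + 1) ω) B) ∧
        (∀ t, 1 ≤ t → ∀ ω, 0 ≤ g' t ω ∧ g' t ω ≤ b' t ω) ∧
        (∀ t, 1 ≤ t → ∃ h : (Fin t → ℝ) → ℝ, Measurable h ∧
          ∀ ω, g' t ω = h (fun i => E (i.1 + 1) ω)) ∧
        r = liminf (fun n : ℕ => (1 / (n : ℝ)) * ∑ t ∈ Finset.Icc 1 n,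
              ∫ ω, (1 / 2) * Real.logb 2 (1 + γ * g' t ω) ∂P) atTop}) :
    (∀ ε > (0:ℝ), ∃ gt bt : ℕ → Ω → ℝ,
      (∀ ω, bt 1 ω = 0) ∧
      (∀ t, 1 ≤ t → ∀ ω, bt (t + 1) ω = min (bt t ω - gt t ω + E (t + 1) ω) B) ∧
      (∀ t, 1 ≤ t → ∀ ω, 0 ≤ gt t ω ∧ gt t ω ≤ bt t ω) ∧
      (∀ t, 1 ≤ t → ∃ h : (Fin t → ℝ) → ℝ, Measurable h ∧
        ∀ ω, gt t ω = h (fun i => E (i.1 + 1) ω)) ∧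
      R - ε ≤ liminf (fun n : ℕ => (1 / (n : ℝ)) * ∑ t ∈ Finset.Icc 1 n,
          ∫ ω, (1 / 2) * Real.logb 2 (1 + γ * gt t ω) ∂P) atTop) ∧
    (∀ x ∈ Set.Icc (0:ℝ) B, sSup (S x) = sSup (S B)) := by
  constructor
  · intro ε hε
    exact core P B γ hB hγ E hEmeas hEnn hindep hident hEpos hEint 0 le_rfl (le_of_lt hB)
      g b hb1 hbrec hadm honline R hR ε hε
  · intro x hx
    obtain ⟨hx0, hxB⟩ := hx
    have hbddS : ∀ y, 0 ≤ y → y ≤ B → BddAbove (S y) := by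
      intro y hy0 hyB
      refine ⟨(1/2 : ℝ) * Real.logb 2 (1 + γ * B), ?_⟩
      intro r hrS
      rw [hS y] at hrS
      obtain ⟨g', b', h1, h2, h3, h4, h5⟩ := hrS
      rw [h5]
      exact policy_liminf_le P B γ hB hγ E hEmeas hEnn y hy0 hyB g' b' h1 h2 h3 h4
    have hne : ∀ y, 0 ≤ y → y ≤ B → (S y).Nonempty := by
      intro y hy0 hyB
      obtain ⟨g', b', h1, h2, h3, h4, h5⟩ := zero_policy P B γ hB hγ E hEnn y hy0 hyB
      refine ⟨0, ?_⟩
      rw [hS y]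
      exact ⟨g', b', h1, h2, h3, h4, h5⟩
    have hsub : S x ⊆ S B := by
      intro r hrS
      rw [hS x] at hrS
      rw [hS B]
      obtain ⟨g', b', h1, h2, h3, h4, h5⟩ := hrS
      refine ⟨g', auxRecB B B g' E, fun ω => rfl,
        fun t ht ω => auxRecB_succ B B g' E t ht ω, ?_, h4, h5⟩
      intro t ht ω
      refine ⟨(h3 t ht ω).1, le_trans (h3 t ht ω).2 ?_⟩
      induction t, ht using Nat.le_induction with
      | base =>
        rw [h1 ω]
        show x ≤ B
        exact hxB
      | succ u hu ih =>
        rw [h2 u hu ω, auxRecB_succ B B g' E u hu ω]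
        apply min_le_min _ le_rfl
        have := (h3 u hu ω).2
        linarith
    have hle : sSup (S x) ≤ sSup (S B) :=
      csSup_le_csSup (hbddS B (le_of_lt hB) le_rfl) (hne x hx0 hxB) hsub
    have hge : sSup (S B) ≤ sSup (S x) := by
      apply csSup_le (hne B (le_of_lt hB) le_rfl)
      intro r hrS
      apply le_of_forall_pos_le_add
      intro ε hε
      rw [hS B] at hrS
      obtain ⟨g', b', h1, h2, h3, h4, h5⟩ := hrS
      obtain ⟨gt, bt, k1, k2, k3, k4, k5⟩ := core P B γ hB hγ E hEmeas hEnn hindep hident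
        hEpos hEint x hx0 hxB g' b' h1 h2 h3 h4 r h5 ε hε
      have hmem : liminf (fun n : ℕ => (1 / (n : ℝ)) * ∑ t ∈ Finset.Icc 1 n,
          ∫ ω, (1 / 2) * Real.logb 2 (1 + γ * gt t ω) ∂P) atTop ∈ S x := by
        rw [hS x]
        exact ⟨gt, bt, k1, k2, k3, k4, rfl⟩
      have hsup := le_csSup (hbddS x hx0 hxB) hmem
      linarith
    exact le_antisymm hle hge
end

section
/- Let 0 < p < 1, B̄ > 0, γ > 0, and let (E_t)_{t≥1} be i.i.d. with P(E_t = B̄) = p and P(E_t = 0) = 1−p. Under the fixed fraction policy g_t = B̄·p·(1−p)^{t−j_t}, where j_t = max{τ ≤ t : E_τ = B̄} (with the convention that t = 1 counts as an arrival), the empirical average rate converges almost surely: lim_{n→∞} (1/n)∑_{t=1}^n ½·log₂(1 + γ·g_t) = ∑_{i=1}^∞ p·(1−p)^{i−1}·½·log₂(1 + γ·B̄·p·(1−p)^{i−1}) almost surely. -/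
open MeasureTheory ProbabilityTheory Filter Finset

open Topology


lemma aux_div_lim (φ : ℕ → ℕ) (c C : ℝ)
    (h : ∀ᶠ n in atTop, |(φ n : ℝ) - c * n| ≤ C) :
    Tendsto (fun n : ℕ => (φ n : ℝ) / n) atTop (𝓝 c) := by
  classical
  have h0 : Tendsto (fun n : ℕ => ((φ n : ℝ) - c * n) / n) atTop (𝓝 0) := by
    apply squeeze_zero_norm' (a := fun n : ℕ => C / n) _
      (tendsto_const_div_atTop_nhds_zero_nat C)
    filter_upwards [h, eventually_ge_atTop 1] with n hn hn1
    have hn0 : (0:ℝ) < n := by exact_mod_cast hn1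
    rw [norm_div, Real.norm_natCast, Real.norm_eq_abs]
    gcongr
  have heq : (fun n : ℕ => ((φ n : ℝ) - c * n) / n + c) =ᶠ[atTop]
      (fun n : ℕ => (φ n : ℝ) / n) := by
    filter_upwards [eventually_ge_atTop 1] with n hn1
    have hn0 : (n:ℝ) ≠ 0 := by positivity
    field_simp
    ring
  have := h0.add (tendsto_const_nhds (x := c) (f := atTop))
  rw [zero_add] at this
  exact this.congr' heq

lemma aux_identdistrib {Ω : Type*} [MeasurableSpace Ω] (P : Measure Ω) [IsProbabilityMeasure P]
    {s s' : Set Ω} (hs : MeasurableSet s) (hs' : MeasurableSet s') (h : P s = P s') :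
    IdentDistrib (s.indicator (1 : Ω → ℝ)) (s'.indicator (1 : Ω → ℝ)) P P := by
  classical
  have key : ∀ (u : Set Ω), ∀ t : Set ℝ,
      u.indicator (1 : Ω → ℝ) ⁻¹' t
        = (if (1:ℝ) ∈ t then u else ∅) ∪ (if (0:ℝ) ∈ t then uᶜ else ∅) := by
    intro u t
    ext ω
    by_cases hω : ω ∈ u <;> split_ifs <;>
      simp_all [Set.indicator_of_mem, Set.indicator_of_notMem]
  have hcs : P sᶜ = P s'ᶜ := by
    rw [measure_compl hs (measure_ne_top P s), measure_compl hs' (measure_ne_top P s'), h]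
  refine ⟨(measurable_one.indicator hs).aemeasurable,
    (measurable_one.indicator hs').aemeasurable, ?_⟩
  refine Measure.ext fun t ht => ?_
  rw [Measure.map_apply (measurable_one.indicator hs) ht,
      Measure.map_apply (measurable_one.indicator hs') ht, key s t, key s' t]
  split_ifs with h1 h0 h0
  · simp [Set.union_compl_self]
  · simp [h]
  · simp [hcs]
  · simp



lemma aux_indicator_comp {Ω : Type*} [MeasurableSpace Ω] (E : ℕ → Ω → ℝ)
    (B : ℝ) (c i : ℕ) :
    ∃ φ : ((Finset.Icc c (c+i) : Finset ℕ) → ℝ) → ℝ, Measurable φ ∧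
      ({ω | E c ω = B ∧ ∀ u ∈ Finset.Icc 1 i, E (c+u) ω = 0} : Set Ω).indicator (1 : Ω → ℝ)
        = φ ∘ (fun ω (v : (Finset.Icc c (c+i) : Finset ℕ)) => E v ω) := by
  classical
  have hc0 : c ∈ Finset.Icc c (c+i) := Finset.mem_Icc.2 ⟨le_refl c, Nat.le_add_right c i⟩
  have hcu : ∀ u, u ∈ Finset.Icc 1 i → c + u ∈ Finset.Icc c (c+i) := fun u hu => by
    rw [Finset.mem_Icc] at *; omega
  refine ⟨Set.indicator {y | y ⟨c, hc0⟩ = B ∧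
      ∀ u, ∀ hu : u ∈ Finset.Icc 1 i, y ⟨c+u, hcu u hu⟩ = 0} 1, ?_, ?_⟩
  · apply measurable_one.indicator
    have hset : {y : (Finset.Icc c (c+i) : Finset ℕ) → ℝ | y ⟨c, hc0⟩ = B ∧
        ∀ u, ∀ hu : u ∈ Finset.Icc 1 i, y ⟨c+u, hcu u hu⟩ = 0}
        = ((fun y : (Finset.Icc c (c+i) : Finset ℕ) → ℝ => y ⟨c, hc0⟩) ⁻¹' {B}) ∩
          ⋂ (u : ℕ) (hu : u ∈ Finset.Icc 1 i),
            ((fun y : (Finset.Icc c (c+i) : Finset ℕ) → ℝ => y ⟨c+u, hcu u hu⟩) ⁻¹' {0}) := by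
      ext y
      simp [Set.mem_iInter]
    rw [hset]
    exact ((measurable_pi_apply _) (measurableSet_singleton _)).inter
      (MeasurableSet.iInter fun u => MeasurableSet.iInter fun hu =>
        (measurable_pi_apply _) (measurableSet_singleton _))
  · funext ω
    simp only [Function.comp_apply, Set.indicator_apply]
    refine if_congr ?_ rfl rfl
    simp only [Set.mem_setOf_eq]

set_option maxHeartbeats 1000000 in
lemma det_glue (p : ℝ) (hp0 : 0 < p) (hp1 : p < 1) (h : ℕ → ℝ)
    (hpos : ∀ i, 0 < h i) (hanti : Antitone h)
    (hlim : Tendsto h atTop (𝓝 0)) (A : ℕ → ℕ)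
    (hcount : ∀ i : ℕ, Tendsto (fun n : ℕ =>
        (∑ t ∈ Finset.Icc 1 n, (if A t = i then (1:ℝ) else 0)) / n) atTop
        (𝓝 (p * (1 - p) ^ i))) :
    Tendsto (fun n : ℕ => (1 / (n : ℝ)) * ∑ t ∈ Finset.Icc 1 n, h (A t)) atTop
      (𝓝 (∑' i : ℕ, p * (1 - p) ^ i * h i)) := by
  classical
  have h1p0 : (0:ℝ) ≤ 1 - p := by linarith
  have h1p0' : (0:ℝ) < 1 - p := by linarith
  have h1p1 : (1:ℝ) - p < 1 := by linarith
  set q : ℕ → ℝ := fun i => p * (1 - p) ^ i with hq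
  have hqpos : ∀ i, 0 < q i := fun i => by
    rw [hq]; positivity
  have hgeo : Summable fun i : ℕ => (1-p)^i := summable_geometric_of_lt_one h1p0 h1p1
  have hqsum : Summable q := hgeo.mul_left p
  have hqh : Summable fun i => q i * h i := by
    apply Summable.of_nonneg_of_le (fun i => mul_nonneg (hqpos i).le (hpos i).le) (fun i => ?_)
      (hqsum.mul_right (h 0))
    exact mul_le_mul_of_nonneg_left (hanti (Nat.zero_le i)) (hqpos i).le
  have htsumq : ∑' i, q i = 1 := by
    rw [hq]
    rw [tsum_mul_left, tsum_geometric_of_lt_one h1p0 h1p1]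
    have : (1:ℝ) - (1-p) = p := by ring
    rw [this]
    field_simp
  set L := ∑' i, q i * h i with hL
  rw [Metric.tendsto_atTop]
  intro ε hε
  obtain ⟨M, hM⟩ := (hlim.eventually_lt_const (show (0:ℝ) < ε/4 by linarith)).exists
  have htail : 0 ≤ L - ∑ i ∈ range M, q i * h i ∧
      L - ∑ i ∈ range M, q i * h i ≤ ε/4 := by
    have hsplit := Summable.sum_add_tsum_nat_add M hqh
    have hsq : Summable fun i : ℕ => q (i+M) := (summable_nat_add_iff M).2 hqsum
    have htail_le : ∑' i:ℕ, q (i+M) * h (i+M) ≤ h M := by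
      calc ∑' i:ℕ, q (i+M) * h (i+M) ≤ ∑' i:ℕ, q (i+M) * h M := by
            apply Summable.tsum_le_tsum _ ((summable_nat_add_iff (f := fun i => q i * h i) M).2 hqh) (hsq.mul_right _)
            intro i
            exact mul_le_mul_of_nonneg_left (hanti (Nat.le_add_left M i)) (hqpos _).le
        _ = (∑' i:ℕ, q (i+M)) * h M := tsum_mul_right
        _ ≤ 1 * h M := by
            apply mul_le_mul_of_nonneg_right _ (hpos M).le
            have h2 := Summable.sum_add_tsum_nat_add M hqsum
            have hpart : 0 ≤ ∑ i ∈ range M, q i :=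
              Finset.sum_nonneg fun i _ => (hqpos i).le
            linarith [htsumq]
        _ = h M := one_mul _
    constructor
    · have h3 : 0 ≤ ∑' i:ℕ, q (i+M) * h (i+M) :=
        tsum_nonneg fun i => mul_nonneg (hqpos _).le (hpos _).le
      linarith [hsplit]
    · have := hM
      linarith [hsplit, htail_le]
  set δ := ε / (4 * (M * h 0 + 1)) with hδ
  have hδpos : 0 < δ := by
    apply div_pos hε
    have : (0:ℝ) ≤ (M:ℝ) * h 0 := mul_nonneg (Nat.cast_nonneg M) (hpos 0).le
    linarith
  have hev : ∀ᶠ n : ℕ in atTop, ∀ i ∈ range M,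
      |(∑ t ∈ Finset.Icc 1 n, (if A t = i then (1:ℝ) else 0)) / n - q i| < δ := by
    rw [eventually_all_finset]
    intro i _
    filter_upwards [(hcount i).eventually (Metric.ball_mem_nhds (q i) hδpos)] with n hn
    simpa [Real.dist_eq] using hn
  have hfin := (hev.and (eventually_ge_atTop 1)).exists_forall_of_atTop
  obtain ⟨N, hN⟩ := hfin
  refine ⟨N, fun n hn => ?_⟩
  obtain ⟨hn1, hn2⟩ := hN n hn
  have hn0 : (0:ℝ) < n := by exact_mod_cast hn2
  set c : ℕ → ℝ := fun i => ∑ t ∈ Finset.Icc 1 n, (if A t = i then (1:ℝ) else 0) with hc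
  -- decomposition
  have hdecomp : ∑ t ∈ Finset.Icc 1 n, h (A t)
      = (∑ i ∈ range M, c i * h i)
        + ∑ t ∈ (Finset.Icc 1 n).filter (fun t => ¬ A t < M), h (A t) := by
    rw [← Finset.sum_filter_add_sum_filter_not (Finset.Icc 1 n) (fun t => A t < M)
      (fun t => h (A t))]
    congr 1
    rw [← Finset.sum_fiberwise_of_maps_to (g := A) (t := range M)
      (fun t ht => Finset.mem_range.2 (Finset.mem_filter.1 ht).2) (fun t => h (A t))]
    apply Finset.sum_congr rfl
    intro i hi
    have hff : ((Finset.Icc 1 n).filter (fun t => A t < M)).filter (fun t => A t = i)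
        = (Finset.Icc 1 n).filter (fun t => A t = i) := by
      rw [Finset.filter_filter]
      apply Finset.filter_congr
      intro t _
      constructor
      · exact fun hh => hh.2
      · exact fun hh => ⟨hh ▸ Finset.mem_range.1 hi, hh⟩
    rw [hff]
    have hcard : c i = (((Finset.Icc 1 n).filter (fun t => A t = i)).card : ℝ) := by
      rw [hc]
      simpa using Finset.sum_boole (fun t => A t = i) (Finset.Icc 1 n)
    calc ∑ t ∈ (Finset.Icc 1 n).filter (fun t => A t = i), h (A t)
        = ∑ t ∈ (Finset.Icc 1 n).filter (fun t => A t = i), h i :=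
          Finset.sum_congr rfl fun t ht => by rw [(Finset.mem_filter.1 ht).2]
      _ = (((Finset.Icc 1 n).filter (fun t => A t = i)).card : ℝ) * h i := by
          rw [Finset.sum_const, nsmul_eq_mul]
      _ = c i * h i := by rw [hcard]
  set R := ∑ t ∈ (Finset.Icc 1 n).filter (fun t => ¬ A t < M), h (A t) with hR
  have hR0 : 0 ≤ R := Finset.sum_nonneg fun t _ => (hpos _).le
  have hRle : R ≤ n * h M := by
    calc R ≤ ∑ t ∈ (Finset.Icc 1 n).filter (fun t => ¬ A t < M), h M :=
          Finset.sum_le_sum fun t ht =>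
            hanti (not_lt.1 (Finset.mem_filter.1 ht).2)
      _ = (((Finset.Icc 1 n).filter (fun t => ¬ A t < M)).card : ℝ) * h M := by
          rw [Finset.sum_const, nsmul_eq_mul]
      _ ≤ n * h M := by
          apply mul_le_mul_of_nonneg_right _ (hpos M).le
          have h1 : ((Finset.Icc 1 n).filter (fun t => ¬ A t < M)).card ≤ (Finset.Icc 1 n).card :=
            Finset.card_filter_le _ _
          have h2 : (Finset.Icc 1 n).card = n := by rw [Nat.card_Icc]; omega
          exact_mod_cast h2 ▸ h1
  have key : (1/(n:ℝ)) * ∑ t ∈ Finset.Icc 1 n, h (A t)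
      = (∑ i ∈ range M, (c i / n) * h i) + R / n := by
    rw [hdecomp, mul_add]
    congr 1
    · rw [Finset.mul_sum]
      exact Finset.sum_congr rfl fun i _ => by ring
    · ring
  rw [Real.dist_eq, key]
  have e1 : |∑ i ∈ range M, (c i/n) * h i - ∑ i ∈ range M, q i * h i| ≤ ε/4 := by
    rw [← Finset.sum_sub_distrib]
    calc |∑ i ∈ range M, ((c i/n) * h i - q i * h i)|
        ≤ ∑ i ∈ range M, |(c i/n) * h i - q i * h i| := Finset.abs_sum_le_sum_abs _ _
      _ ≤ ∑ i ∈ range M, δ * h 0 := by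
          apply Finset.sum_le_sum
          intro i hi
          rw [show (c i/n) * h i - q i * h i = (c i/n - q i) * h i by ring, abs_mul,
            abs_of_pos (hpos i)]
          exact mul_le_mul (hn1 i hi).le (hanti (Nat.zero_le i)) (hpos i).le hδpos.le
      _ = M * (δ * h 0) := by rw [Finset.sum_const, Finset.card_range, nsmul_eq_mul]
      _ ≤ ε/4 := by
          rw [hδ]
          have hx : (0:ℝ) ≤ (M:ℝ) * h 0 := mul_nonneg (Nat.cast_nonneg M) (hpos 0).le
          have h4 : (0:ℝ) < 4 * ((M:ℝ) * h 0 + 1) := by linarith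
          rw [show (M:ℝ) * (ε / (4 * ((M:ℝ) * h 0 + 1)) * h 0)
              = ((M:ℝ) * h 0) * ε / (4 * ((M:ℝ) * h 0 + 1)) by ring,
            div_le_div_iff₀ h4 (by norm_num : (0:ℝ) < 4)]
          nlinarith
  have e2 : |R / n| ≤ ε/4 := by
    rw [abs_of_nonneg (div_nonneg hR0 hn0.le), div_le_iff₀ hn0]
    calc R ≤ n * h M := hRle
      _ ≤ ε/4 * n := by rw [mul_comm]; exact mul_le_mul_of_nonneg_right hM.le hn0.le
  have e3 : |∑ i ∈ range M, q i * h i - L| ≤ ε/4 := by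
    rw [abs_sub_comm, abs_of_nonneg htail.1]
    exact htail.2
  calc |(∑ i ∈ range M, (c i/n) * h i) + R/n - L|
      = |((∑ i ∈ range M, (c i/n) * h i) - ∑ i ∈ range M, q i * h i) + R/n
          + ((∑ i ∈ range M, q i * h i) - L)| := by congr 1; ring
    _ ≤ |(∑ i ∈ range M, (c i/n) * h i) - ∑ i ∈ range M, q i * h i| + |R/n|
          + |(∑ i ∈ range M, q i * h i) - L| := abs_add_three _ _ _
    _ ≤ ε/4 + ε/4 + ε/4 := by linarith [e1, e2, e3]
    _ < ε := by linarith

/-- The event that an arrival happens at time `s+2` and then silence for `i` slots. -/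
def Sev {Ω : Type*} (E : ℕ → Ω → ℝ) (B : ℝ) (i s : ℕ) : Set Ω :=
  {ω | E (s+2) ω = B ∧ ∀ u ∈ Finset.Icc 1 i, E (s+2+u) ω = 0}

/-- Its indicator. -/
noncomputable def Vf {Ω : Type*} (E : ℕ → Ω → ℝ) (B : ℝ) (i s : ℕ) : Ω → ℝ :=
  (Sev E B i s).indicator (1 : Ω → ℝ)

set_option maxHeartbeats 1000000 in
lemma count_lln {Ω : Type*} [MeasurableSpace Ω] (P : Measure Ω) [IsProbabilityMeasure P]
    (p B : ℝ) (hp0 : 0 < p) (hp1 : p < 1) (hB : 0 < B)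
    (E : ℕ → Ω → ℝ) (hEmeas : ∀ t, Measurable (E t))
    (hindep : iIndepFun E P)
    (hbern : ∀ t, 1 ≤ t → P {ω | E t ω = B} = ENNReal.ofReal p ∧
      P {ω | E t ω = 0} = ENNReal.ofReal (1 - p))
    (hrange : ∀ t ω, E t ω = B ∨ E t ω = 0)
    (j : ℕ → Ω → ℕ)
    (hjle : ∀ t, 1 ≤ t → ∀ ω, 1 ≤ j t ω ∧ j t ω ≤ t)
    (hjarr : ∀ t, 1 ≤ t → ∀ ω, j t ω = 1 ∨ E (j t ω) ω = B)
    (hjmax : ∀ t, 1 ≤ t → ∀ ω, ∀ τ, j t ω < τ → τ ≤ t → E τ ω ≠ B)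
    (i : ℕ) :
    ∀ᵐ ω ∂P, Tendsto (fun n : ℕ =>
        (∑ t ∈ Finset.Icc 1 n, (if t - j t ω = i then (1:ℝ) else 0)) / n) atTop
      (𝓝 (p * (1 - p) ^ i)) := by
  classical
  set m := i + 1 with hm
  have hm0 : 0 < m := Nat.succ_pos i
  -- measurability of the block events
  have hSmeas : ∀ s, MeasurableSet (Sev E B i s) := by
    intro s
    have hSeq : Sev E B i s = (E (s+2) ⁻¹' {B}) ∩
        ⋂ (u : ℕ) (_ : u ∈ Finset.Icc 1 i), (E (s+2+u) ⁻¹' {0}) := by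
      ext ω; simp [Sev, Set.mem_iInter]
    rw [hSeq]
    exact ((hEmeas _) (measurableSet_singleton B)).inter
      (MeasurableSet.iInter fun u => MeasurableSet.iInter fun _ =>
        (hEmeas _) (measurableSet_singleton 0))
  -- probability of the block events
  have hprob : ∀ s, P (Sev E B i s) = ENNReal.ofReal p * ENNReal.ofReal (1-p) ^ i := by
    intro s
    set sets : ℕ → Set ℝ := fun v => if v = s+2 then {B} else {0} with hsets
    have hmeasv : ∀ v, v ∈ Finset.image (fun u => s+2+u) (range m) → MeasurableSet (sets v) := by
      intro v _
      rw [hsets]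
      dsimp only
      split_ifs <;> exact measurableSet_singleton _
    have hformula := hindep.measure_inter_preimage_eq_mul
      (Finset.image (fun u => s+2+u) (range m)) hmeasv
    have hset_eq : (⋂ v ∈ Finset.image (fun u => s+2+u) (range m), E v ⁻¹' sets v)
        = Sev E B i s := by
      ext ω
      constructor
      · intro hω
        have hmem : ∀ v ∈ Finset.image (fun u => s+2+u) (range m), E v ω ∈ sets v :=
          fun v hv => Set.mem_iInter₂.1 hω v hv
        constructor
        · have h0 : (s+2) ∈ Finset.image (fun u => s+2+u) (range m) :=
            Finset.mem_image.2 ⟨0, Finset.mem_range.2 hm0, rfl⟩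
          have := hmem _ h0
          rw [hsets] at this
          simpa using this
        · intro u hu
          rw [Finset.mem_Icc] at hu
          have h0 : (s+2+u) ∈ Finset.image (fun u => s+2+u) (range m) :=
            Finset.mem_image.2 ⟨u, Finset.mem_range.2 (by omega), rfl⟩
          have := hmem _ h0
          rw [hsets] at this
          simp only at this
          rw [if_neg (by omega)] at this
          simpa using this
      · rintro ⟨h1, h2⟩
        apply Set.mem_iInter₂.2
        intro v hv
        obtain ⟨u, hu, rfl⟩ := Finset.mem_image.1 hv
        rw [Finset.mem_range] at hu
        rcases Nat.eq_zero_or_pos u with rfl | hu0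
        · rw [hsets]; simpa using h1
        · rw [hsets]
          simp only
          rw [if_neg (by omega)]
          simpa using h2 u (Finset.mem_Icc.2 ⟨hu0, by omega⟩)
    rw [hset_eq] at hformula
    rw [hformula]
    rw [Finset.prod_image (by intro a _ b _ hab; simp only at hab; omega)]
    have hfact : ∀ u ∈ range m, P (E (s+2+u) ⁻¹' sets (s+2+u))
        = if u = 0 then ENNReal.ofReal p else ENNReal.ofReal (1-p) := by
      intro u _
      rcases eq_or_ne u 0 with rfl | hu0
      · rw [if_pos rfl]
        have hs : sets (s+2+0) = {B} := if_pos (by omega)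
        rw [hs]
        exact (hbern (s+2) (by omega)).1
      · rw [if_neg hu0]
        have hs : sets (s+2+u) = {0} := if_neg (by omega)
        rw [hs]
        exact (hbern (s+2+u) (by omega)).2
    rw [Finset.prod_congr rfl hfact]
    rw [hm, Finset.prod_range_succ']
    norm_num
    exact mul_comm _ _
  -- the pointwise identification of the indicator
  have hVkey : ∀ s (ω : Ω), (if (i+2+s) - j (i+2+s) ω = i then (1:ℝ) else 0) = Vf E B i s ω := by
    intro s ω
    have ht : 1 ≤ i+2+s := by omega
    obtain ⟨hj1, hjt⟩ := hjle _ ht ω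
    have hiff : ((i+2+s) - j (i+2+s) ω = i) ↔ ω ∈ Sev E B i s := by
      constructor
      · intro hA
        have hjval : j (i+2+s) ω = s + 2 := by omega
        constructor
        · rcases hjarr _ ht ω with h1 | hEB
          · omega
          · rwa [hjval] at hEB
        · intro u hu
          rw [Finset.mem_Icc] at hu
          rcases hrange (s+2+u) ω with hEB | hE0
          · exact absurd hEB (hjmax _ ht ω (s+2+u) (by omega) (by omega))
          · exact hE0
      · rintro ⟨hEB, hE0⟩
        have hjval : j (i+2+s) ω = s + 2 := by
          by_contra hne
          rcases Nat.lt_or_ge (j (i+2+s) ω) (s+2) with hlt | hge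
          · exact hjmax _ ht ω (s+2) hlt (by omega) hEB
          · have hgt : s + 2 < j (i+2+s) ω := by omega
            have hu1 : 1 ≤ j (i+2+s) ω - (s+2) := by omega
            have hu2 : j (i+2+s) ω - (s+2) ≤ i := by omega
            have hz := hE0 _ (Finset.mem_Icc.2 ⟨hu1, hu2⟩)
            have heq : s+2+(j (i+2+s) ω - (s+2)) = j (i+2+s) ω := by omega
            rw [heq] at hz
            rcases hjarr _ ht ω with h1 | hEB'
            · omega
            · rw [hz] at hEB'; linarith
        omega
    rw [Vf, Set.indicator_apply]
    refine if_congr hiff rfl ?_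
    simp
  -- the class strong law
  have class_lln : ∀ r : ℕ, ∀ᵐ ω ∂P, Tendsto
      (fun K : ℕ => (∑ k ∈ range K, Vf E B i (k*m+r) ω) / K) atTop
      (𝓝 (p * (1-p)^i)) := by
    intro r
    have hint : Integrable (Vf E B i (0*m+r)) P := by
      rw [Vf]
      exact (integrable_const 1).indicator (hSmeas _)
    have hpairs : Pairwise (Function.onFun (IndepFun · · P) fun k => Vf E B i (k*m+r)) := by
      have main : ∀ k l : ℕ, k < l → IndepFun (Vf E B i (k*m+r)) (Vf E B i (l*m+r)) P := by
        intro k l hkl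
        obtain ⟨φk, hφkm, hφk⟩ := aux_indicator_comp E B (k*m+r+2) i
        obtain ⟨φl, hφlm, hφl⟩ := aux_indicator_comp E B (l*m+r+2) i
        have hdisj : Disjoint (Finset.Icc (k*m+r+2) (k*m+r+2+i))
            (Finset.Icc (l*m+r+2) (l*m+r+2+i)) := by
          rw [Finset.disjoint_left]
          intro a ha hb
          rw [Finset.mem_Icc] at ha hb
          have h1 : k*m + m ≤ l*m := by
            have h2 : (k+1)*m ≤ l*m := Nat.mul_le_mul_right m (Nat.succ_le_of_lt hkl)
            have h3 : (k+1)*m = k*m + m := by ring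
            omega
          omega
        have hind := (hindep.indepFun_finset _ _ hdisj hEmeas).comp hφkm hφlm
        have hVk : Vf E B i (k*m+r) = φk ∘ (fun ω (v : (Finset.Icc (k*m+r+2) (k*m+r+2+i) : Finset ℕ)) => E v ω) := by
          rw [Vf, Sev]
          exact hφk
        have hVl : Vf E B i (l*m+r) = φl ∘ (fun ω (v : (Finset.Icc (l*m+r+2) (l*m+r+2+i) : Finset ℕ)) => E v ω) := by
          rw [Vf, Sev]
          exact hφl
        rw [hVk, hVl]
        exact hind
      intro k l hkl
      rcases hkl.lt_or_gt with h | h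
      · exact main k l h
      · exact (main l k h).symm
    have hident : ∀ k, IdentDistrib (fun ω => Vf E B i (k*m+r) ω) (fun ω => Vf E B i (0*m+r) ω) P P := by
      intro k
      exact aux_identdistrib P (hSmeas _) (hSmeas _) (by rw [hprob, hprob])
    have hslln := strong_law_ae_real (fun k => Vf E B i (k*m+r)) hint hpairs hident
    have hmean : (∫ ω, Vf E B i (0*m+r) ω ∂P) = p * (1-p)^i := by
      rw [Vf, integral_indicator_one (hSmeas _), measureReal_def, hprob, ENNReal.toReal_mul, ENNReal.toReal_pow,
        ENNReal.toReal_ofReal hp0.le, ENNReal.toReal_ofReal (by linarith)]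
    rw [hmean] at hslln
    exact hslln
  -- combine over residue classes
  have hall := ae_all_iff.2 class_lln
  filter_upwards [hall] with ω hω
  -- notation
  set K : ℕ → ℕ → ℕ := fun r n => (n - r - 1 + m)/m with hK
  have hK1 : ∀ r n, 1 ≤ K r n := by
    intro r n
    rw [hK]
    exact (Nat.one_le_div_iff hm0).2 (by omega)
  have hKtop : ∀ r, Tendsto (fun n => K r n) atTop atTop := by
    intro r
    rw [tendsto_atTop_atTop]
    refine fun b => ⟨m*b + r + 1, fun n hn => ?_⟩
    rw [hK]
    dsimp only
    rw [Nat.le_div_iff_mul_le hm0]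
    have hc : b*m = m*b := Nat.mul_comm b m
    omega
  have hKbound : ∀ r, r < m → ∀ n, r+1 ≤ n → |(K r n : ℝ) - (1/m)*n| ≤ 1 := by
    intro r hr n hn
    have hdiv : K r n = (n - r - 1)/m + 1 := by
      rw [hK]
      exact Nat.add_div_right _ hm0
    have hmod := Nat.div_add_mod (n - r - 1) m
    have hrem : (n - r - 1) % m < m := Nat.mod_lt _ hm0
    have hcast : ((n - r - 1 : ℕ):ℝ) = (n:ℝ) - r - 1 := by
      have hh : (n - r - 1) + (r+1) = n := by omega
      have := congrArg (fun x : ℕ => (x:ℝ)) hh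
      push_cast at this
      linarith
    have hq : (m:ℝ) * ((n - r - 1)/m : ℕ) + ((n - r - 1) % m : ℕ) = ((n - r - 1 : ℕ):ℝ) := by
      exact_mod_cast hmod
    have hm1 : (1:ℝ) ≤ m := by exact_mod_cast hm0
    have hrm : (r:ℝ) + 1 ≤ m := by exact_mod_cast hr
    have hrem' : ((n - r - 1) % m : ℕ) + (1:ℝ) ≤ m := by exact_mod_cast hrem
    have hrem0 : (0:ℝ) ≤ ((n - r - 1) % m : ℕ) := Nat.cast_nonneg _
    have hKr : (K r n : ℝ) = ((n - r - 1)/m : ℕ) + 1 := by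
      rw [hdiv]; push_cast; ring
    have hmpos : (0:ℝ) < m := by linarith
    rw [hKr, abs_le]
    have h1n : 1/(m:ℝ)*n = n/m := by ring
    rw [h1n]
    constructor
    · rw [neg_le, neg_sub, sub_le_iff_le_add, div_le_iff₀ hmpos]
      nlinarith
    · rw [sub_le_iff_le_add, ← sub_le_iff_le_add', le_div_iff₀ hmpos]
      nlinarith
  -- the partition of the sum by residue classes
  have hsplit : ∀ n, m ≤ n → ∑ s ∈ range n, Vf E B i s ω
      = ∑ r ∈ range m, ∑ k ∈ range (K r n), Vf E B i (k*m+r) ω := by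
    intro n hn
    rw [← Finset.sum_fiberwise_of_maps_to (g := fun s => s % m) (t := range m)
      (fun s _ => Finset.mem_range.2 (Nat.mod_lt _ hm0)) (fun s => Vf E B i s ω)]
    apply Finset.sum_congr rfl
    intro r hr
    have hrm : r < m := Finset.mem_range.1 hr
    have hrn : r + 1 ≤ n := by omega
    have hdiv : K r n = (n - r - 1)/m + 1 := by
      rw [hK]; exact Nat.add_div_right _ hm0
    refine Finset.sum_nbij' (i := fun s => s / m) (j := fun k => k*m+r) ?_ ?_ ?_ ?_ ?_
    · intro s hs
      rw [Finset.mem_filter, Finset.mem_range] at hs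
      obtain ⟨hsn, hsr⟩ := hs
      rw [Finset.mem_range, hdiv]
      have h1 : m * (s/m) + s % m = s := Nat.div_add_mod s m
      have h2 : (s/m) * m ≤ n - r - 1 := by
        have hc : m * (s/m) = (s/m) * m := Nat.mul_comm _ _
        omega
      have h3 : s/m ≤ (n - r - 1)/m := (Nat.le_div_iff_mul_le hm0).2 h2
      omega
    · intro k hk
      rw [Finset.mem_range, hdiv] at hk
      have h2 : k ≤ (n - r - 1)/m := by omega
      have h3 : k * m ≤ n - r - 1 := (Nat.le_div_iff_mul_le hm0).1 h2
      rw [Finset.mem_filter, Finset.mem_range]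
      constructor
      · omega
      · rw [mul_comm k m, Nat.mul_add_mod]
        exact Nat.mod_eq_of_lt hrm
    · intro s hs
      rw [Finset.mem_filter] at hs
      have h1 : m * (s/m) + s % m = s := Nat.div_add_mod s m
      have hc : m * (s/m) = (s/m) * m := Nat.mul_comm _ _
      omega
    · intro k _
      rw [mul_comm k m, Nat.mul_add_div hm0]
      simp [Nat.div_eq_of_lt hrm]
    · intro s hs
      rw [Finset.mem_filter] at hs
      have h1 : m * (s/m) + s % m = s := Nat.div_add_mod s m
      have hc : m * (s/m) = (s/m) * m := Nat.mul_comm _ _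
      have hss : s/m*m + r = s := by omega
      rw [hss]
  -- the boundary decomposition
  have hL1 : ∀ n, i+1 ≤ n → (∑ t ∈ Finset.Icc 1 n, (if t - j t ω = i then (1:ℝ) else 0))
      = (if (i+1) - j (i+1) ω = i then (1:ℝ) else 0)
        + ∑ s ∈ range (n - (i+1)), Vf E B i s ω := by
    intro n hn
    have hIoc : Finset.Icc 1 n = Finset.Ioc 0 n := Finset.Icc_add_one_left_eq_Ioc 0 n
    rw [hIoc, ← Finset.sum_Ioc_consecutive _ (Nat.zero_le (i+1)) hn]
    congr 1
    · rw [Finset.sum_Ioc_succ_top (Nat.zero_le i)]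
      have hz : ∑ t ∈ Finset.Ioc 0 i, (if t - j t ω = i then (1:ℝ) else 0) = 0 := by
        apply Finset.sum_eq_zero
        intro t ht
        rw [Finset.mem_Ioc] at ht
        obtain ⟨hj1, hjt⟩ := hjle t (by omega) ω
        rw [if_neg]
        omega
      rw [hz, zero_add]
    · have hIcc : Finset.Ioc (i+1) n = Finset.Icc (i+2) n := (Finset.Icc_add_one_left_eq_Ioc (i+1) n).symm
      rw [hIcc, ← Finset.Ico_add_one_right_eq_Icc, Finset.sum_Ico_eq_sum_range]
      have hlen : n + 1 - (i+2) = n - (i+1) := by omega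
      rw [hlen]
      apply Finset.sum_congr rfl
      intro s _
      exact hVkey s ω
  -- the limit of each class term
  have hterm : ∀ r, r < m → Tendsto (fun n : ℕ =>
      ((∑ k ∈ range (K r (n - (i+1))), Vf E B i (k*m+r) ω) / (K r (n-(i+1))))
        * ((K r (n-(i+1)) : ℝ)/n)) atTop (𝓝 ((p * (1-p)^i) * (1/m))) := by
    intro r hr
    have h1 : Tendsto (fun n : ℕ => K r (n - (i+1))) atTop atTop :=
      (hKtop r).comp (tendsto_sub_atTop_nat (i+1))
    have h2 := (hω r).comp h1
    have h3 : Tendsto (fun n : ℕ => (K r (n-(i+1)) : ℝ)/n) atTop (𝓝 (1/m)) := by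
      apply aux_div_lim _ _ ((i:ℝ)+2)
      filter_upwards [eventually_ge_atTop (i+1+r+1)] with n hn
      have hb := hKbound r hr (n - (i+1)) (by omega)
      have hc : ((n - (i+1) : ℕ) : ℝ) = (n:ℝ) - (i+1) := by
        have hh : (n - (i+1)) + (i+1) = n := by omega
        have := congrArg (fun x : ℕ => (x:ℝ)) hh
        push_cast at this
        linarith
      rw [hc] at hb
      have hm1 : (1:ℝ) ≤ m := by exact_mod_cast hm0
      have h1m : 1/(m:ℝ) ≤ 1 := by
        rw [div_le_one (by linarith)]; linarith
      have h1m0 : 0 < 1/(m:ℝ) := by positivity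
      have key : (K r (n-(i+1)) : ℝ) - 1/m*n
          = ((K r (n-(i+1)) : ℝ) - 1/m*((n:ℝ)-(i+1))) - 1/m*((i:ℝ)+1) := by ring
      rw [key]
      calc |((K r (n-(i+1)) : ℝ) - 1/m*((n:ℝ)-(i+1))) - 1/m*((i:ℝ)+1)|
          ≤ |(K r (n-(i+1)) : ℝ) - 1/m*((n:ℝ)-(i+1))| + |1/m*((i:ℝ)+1)| := abs_sub _ _
        _ ≤ 1 + ((i:ℝ)+1) := by
            apply add_le_add hb
            rw [abs_of_nonneg (by positivity)]
            nlinarith [Nat.cast_nonneg (α := ℝ) i]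
        _ ≤ (i:ℝ)+2 := by linarith
    exact (h2.congr fun n => rfl).mul h3
  have hsum_tendsto := tendsto_finset_sum (range m)
    (fun r hr => hterm r (Finset.mem_range.1 hr))
  have hval : ∑ _r ∈ range m, (p * (1-p)^i) * (1/(m:ℝ)) = p * (1-p)^i := by
    rw [Finset.sum_const, Finset.card_range, nsmul_eq_mul]
    have hmne : (m:ℝ) ≠ 0 := by positivity
    field_simp
  rw [hval] at hsum_tendsto
  have hb0 : Tendsto (fun n : ℕ => (if (i+1) - j (i+1) ω = i then (1:ℝ) else 0) / n)
      atTop (𝓝 0) := tendsto_const_div_atTop_nhds_zero_nat _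
  have hmain := hb0.add hsum_tendsto
  rw [zero_add] at hmain
  apply hmain.congr'
  filter_upwards [eventually_ge_atTop (m + (i+1) + 1)] with n hn
  have hn1 : i+1 ≤ n := by omega
  rw [hL1 n hn1, add_div]
  congr 1
  rw [hsplit (n - (i+1)) (by omega), Finset.sum_div]
  apply Finset.sum_congr rfl
  intro r _
  have hK0 : ((K r (n-(i+1)) : ℕ):ℝ) ≠ 0 := by
    have := hK1 r (n-(i+1))
    positivity
  rw [div_mul_div_comm, mul_comm (∑ k ∈ range (K r (n-(i+1))), Vf E B i (k*m+r) ω) (K r (n-(i+1)) : ℝ),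
    mul_div_mul_left _ _ hK0]



/-- **Almost-sure convergence of the empirical rate of the fixed fraction policy.** Let
`E` be i.i.d. with `P(E t = B) = p`, `P(E t = 0) = 1 - p`, `0 < p < 1`, `B > 0`,
`γ > 0`, and let `j t` be the time of the last energy arrival up to time `t` (time `1`
counting as an arrival). Under the policy `g t = B p (1-p)^{t - j t}`, almost surely
`(1/n) ∑_{t=1}^n ½ log₂(1 + γ g t) → ∑_{i=1}^∞ p (1-p)^{i-1} ½ log₂(1 + γ B p (1-p)^{i-1})`
(the series below being indexed by `i : ℕ` starting at `0`). -/
theorem stmt_18 {Ω : Type*} [MeasurableSpace Ω] (P : Measure Ω) [IsProbabilityMeasure P]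
    (p B γ : ℝ) (hp0 : 0 < p) (hp1 : p < 1) (hB : 0 < B) (hγ : 0 < γ)
    (E : ℕ → Ω → ℝ) (hEmeas : ∀ t, Measurable (E t))
    (hindep : iIndepFun E P)
    (hbern : ∀ t, 1 ≤ t → P {ω | E t ω = B} = ENNReal.ofReal p ∧
      P {ω | E t ω = 0} = ENNReal.ofReal (1 - p))
    (hrange : ∀ t ω, E t ω = B ∨ E t ω = 0)
    (j : ℕ → Ω → ℕ)
    (hjle : ∀ t, 1 ≤ t → ∀ ω, 1 ≤ j t ω ∧ j t ω ≤ t)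
    (hjarr : ∀ t, 1 ≤ t → ∀ ω, j t ω = 1 ∨ E (j t ω) ω = B)
    (hjmax : ∀ t, 1 ≤ t → ∀ ω, ∀ τ, j t ω < τ → τ ≤ t → E τ ω ≠ B)
    (g : ℕ → Ω → ℝ)
    (hg : ∀ t, 1 ≤ t → ∀ ω, g t ω = B * p * (1 - p) ^ (t - j t ω)) :
    ∀ᵐ ω ∂P, Tendsto (fun n : ℕ => (1 / (n : ℝ)) * ∑ t ∈ Finset.Icc 1 n,
        (1 / 2) * Real.logb 2 (1 + γ * g t ω)) atTop
      (nhds (∑' i : ℕ, p * (1 - p) ^ i *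
        ((1 / 2) * Real.logb 2 (1 + γ * B * p * (1 - p) ^ i)))) := by
  have h1p0 : (0:ℝ) < 1 - p := by linarith
  have h1p1 : (1:ℝ) - p < 1 := by linarith
  set h : ℕ → ℝ := fun i => (1 / 2) * Real.logb 2 (1 + γ * B * p * (1 - p) ^ i) with hh
  have hargpos : ∀ i : ℕ, 0 < γ * B * p * (1 - p) ^ i := by
    intro i; positivity
  have hpos : ∀ i, 0 < h i := by
    intro i
    rw [hh]
    dsimp only
    have := Real.logb_pos (b := 2) (x := 1 + γ * B * p * (1 - p) ^ i)
      one_lt_two (by linarith [hargpos i])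
    linarith
  have hanti : Antitone h := by
    intro a b hab
    rw [hh]
    dsimp only
    have hle : (1-p)^b ≤ (1-p)^a := pow_le_pow_of_le_one h1p0.le (by linarith) hab
    have harg : 1 + γ * B * p * (1 - p) ^ b ≤ 1 + γ * B * p * (1 - p) ^ a := by
      have : γ * B * p * (1-p)^b ≤ γ * B * p * (1-p)^a :=
        mul_le_mul_of_nonneg_left hle (by positivity)
      linarith
    have := Real.logb_le_logb_of_le one_lt_two (by linarith [hargpos b]) harg
    linarith
  have hlim : Tendsto h atTop (𝓝 0) := by
    have h1 : Tendsto (fun i : ℕ => 1 + γ * B * p * (1 - p) ^ i) atTop (𝓝 1) := by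
      have h2 := (tendsto_pow_atTop_nhds_zero_of_lt_one h1p0.le h1p1).const_mul (γ * B * p)
      have h3 := h2.const_add 1
      simpa using h3
    have h4 : Tendsto (fun i : ℕ => Real.log (1 + γ * B * p * (1 - p) ^ i)) atTop (𝓝 0) := by
      have := (Real.continuousAt_log one_ne_zero).tendsto.comp h1
      rw [Real.log_one] at this
      exact this
    have h5 : Tendsto h atTop (𝓝 ((1/2) * (0 / Real.log 2))) := by
      rw [hh]
      simp only [Real.logb]
      exact ((h4.div_const (Real.log 2)).const_mul (1/2))
    simpa using h5
  have hae := ae_all_iff.2 (fun i => count_lln P p B hp0 hp1 hB E hEmeas hindep hbern hrange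
    j hjle hjarr hjmax i)
  filter_upwards [hae] with ω hω
  have hdet := det_glue p hp0 hp1 h hpos hanti hlim (fun t => t - j t ω) hω
  apply hdet.congr
  intro n
  congr 1
  apply Finset.sum_congr rfl
  intro t ht
  rw [Finset.mem_Icc] at ht
  rw [hg t ht.1 ω, hh]
  have : γ * (B * p * (1 - p) ^ (t - j t ω)) = γ * B * p * (1 - p) ^ (t - j t ω) := by ring
  rw [this]
end
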